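/- arXiv:2311.02974 — 6 statements merged into one kernel-verified Lean document; each statement's English description precedes it below -/
import Mathlib

section
/- The number of permutations of length n avoiding both patterns 231 and 312 is 2^(n-1) for all n ≥ 1. -/
/-- The value of `π` at position `i` (0-based), as a natural number; `0` if out of range. -/
def pv {n : ℕ} (π : Equiv.Perm (Fin n)) (i : ℕ) : ℕ :=
  if h : i < n then (π ⟨i, h⟩ : ℕ) else 0

/-- The set of ascent positions (0-based) of `π`. -/
def ascents {n : ℕ} (π : Equiv.Perm (Fin n)) : Finset ℕ :=
  (Finset.range (n - 1)).filter fun i => pv π i < pv π (i + 1)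

/-- The set of descent positions (0-based) of `π`. -/
def descents {n : ℕ} (π : Equiv.Perm (Fin n)) : Finset ℕ :=
  (Finset.range (n - 1)).filter fun i => pv π (i + 1) < pv π i

def asc {n : ℕ} (π : Equiv.Perm (Fin n)) : ℕ := (ascents π).card

def des {n : ℕ} (π : Equiv.Perm (Fin n)) : ℕ := (descents π).card

/-- The maximum number of non-overlapping ascents of `π`. -/
noncomputable def MNA {n : ℕ} (π : Equiv.Perm (Fin n)) : ℕ :=
  sSup {k | ∃ S ⊆ ascents π, S.card = k ∧ ∀ i ∈ S, ∀ j ∈ S, i < j → i + 1 < j}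

/-- The maximum number of non-overlapping descents of `π`. -/
noncomputable def MND {n : ℕ} (π : Equiv.Perm (Fin n)) : ℕ :=
  sSup {k | ∃ S ⊆ descents π, S.card = k ∧ ∀ i ∈ S, ∀ j ∈ S, i < j → i + 1 < j}

def IsLRMax {n : ℕ} (π : Equiv.Perm (Fin n)) (i : Fin n) : Prop := ∀ j, j < i → π j < π i
def IsRLMax {n : ℕ} (π : Equiv.Perm (Fin n)) (i : Fin n) : Prop := ∀ j, i < j → π j < π i
def IsLRMin {n : ℕ} (π : Equiv.Perm (Fin n)) (i : Fin n) : Prop := ∀ j, j < i → π i < π j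
def IsRLMin {n : ℕ} (π : Equiv.Perm (Fin n)) (i : Fin n) : Prop := ∀ j, i < j → π i < π j

noncomputable def lrmax {n : ℕ} (π : Equiv.Perm (Fin n)) : ℕ := Nat.card {i : Fin n // IsLRMax π i}
noncomputable def rlmax {n : ℕ} (π : Equiv.Perm (Fin n)) : ℕ := Nat.card {i : Fin n // IsRLMax π i}
noncomputable def lrmin {n : ℕ} (π : Equiv.Perm (Fin n)) : ℕ := Nat.card {i : Fin n // IsLRMin π i}
noncomputable def rlmin {n : ℕ} (π : Equiv.Perm (Fin n)) : ℕ := Nat.card {i : Fin n // IsRLMin π i}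

def Avoids123 {n : ℕ} (π : Equiv.Perm (Fin n)) : Prop :=
  ¬ ∃ i j k : Fin n, i < j ∧ j < k ∧ π i < π j ∧ π j < π k
def Avoids132 {n : ℕ} (π : Equiv.Perm (Fin n)) : Prop :=
  ¬ ∃ i j k : Fin n, i < j ∧ j < k ∧ π i < π k ∧ π k < π j
def Avoids213 {n : ℕ} (π : Equiv.Perm (Fin n)) : Prop :=
  ¬ ∃ i j k : Fin n, i < j ∧ j < k ∧ π j < π i ∧ π i < π k
def Avoids231 {n : ℕ} (π : Equiv.Perm (Fin n)) : Prop :=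
  ¬ ∃ i j k : Fin n, i < j ∧ j < k ∧ π k < π i ∧ π i < π j
def Avoids312 {n : ℕ} (π : Equiv.Perm (Fin n)) : Prop :=
  ¬ ∃ i j k : Fin n, i < j ∧ j < k ∧ π j < π k ∧ π k < π i
def Avoids321 {n : ℕ} (π : Equiv.Perm (Fin n)) : Prop :=
  ¬ ∃ i j k : Fin n, i < j ∧ j < k ∧ π k < π j ∧ π j < π i


namespace AvoidAux

/-- start of the block of `i` determined by boundary set `S`. -/
def aSt (S : Finset ℕ) (i : ℕ) : ℕ := Nat.findGreatest (fun j => 0 < j ∧ j - 1 ∈ S) i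

/-- end of the block of `i`. -/
def bEn (n : ℕ) (S : Finset ℕ) (i : ℕ) : ℕ :=
  Nat.find (p := fun j => i ≤ j ∧ (j ∈ S ∨ n ≤ j + 1))
    ⟨i + n, Nat.le_add_right _ _, Or.inr (by omega)⟩

variable {n : ℕ} {S : Finset ℕ} {i j k a b : ℕ}

lemma le_bEn : i ≤ bEn n S i := (Nat.find_spec (p := fun j => i ≤ j ∧ (j ∈ S ∨ n ≤ j + 1)) _).1

lemma bEn_mem : bEn n S i ∈ S ∨ n ≤ bEn n S i + 1 :=
  (Nat.find_spec (p := fun j => i ≤ j ∧ (j ∈ S ∨ n ≤ j + 1)) _).2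

lemma bEn_lt (hi : i < n) : bEn n S i < n := by
  have h : bEn n S i ≤ n - 1 :=
    Nat.find_le (p := fun j => i ≤ j ∧ (j ∈ S ∨ n ≤ j + 1)) ⟨by omega, Or.inr (by omega)⟩
  omega

lemma bEn_notMem (h1 : i ≤ k) (h2 : k < bEn n S i) : k ∉ S := by
  have h := Nat.find_min (p := fun j => i ≤ j ∧ (j ∈ S ∨ n ≤ j + 1)) _ h2
  intro hk
  exact h ⟨h1, Or.inl hk⟩

lemma bEn_eq (hb : i ≤ b) (hbn : b < n) (h1 : b ∈ S ∨ n ≤ b + 1)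
    (h2 : ∀ k, i ≤ k → k < b → k ∉ S) : bEn n S i = b := by
  have hle : bEn n S i ≤ b := Nat.find_le ⟨hb, h1⟩
  rcases lt_or_eq_of_le hle with h | h
  · exfalso
    rcases bEn_mem (n := n) (S := S) (i := i) with hm | hm
    · exact h2 _ le_bEn h hm
    · omega
  · exact h

lemma aSt_le : aSt S i ≤ i := Nat.findGreatest_le i

lemma aSt_mem : aSt S i = 0 ∨ aSt S i - 1 ∈ S := by
  rcases Nat.eq_zero_or_pos (aSt S i) with h | h
  · exact Or.inl h
  · right
    exact (Nat.findGreatest_of_ne_zero (P := fun j => 0 < j ∧ j - 1 ∈ S) (n := i)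
      (m := aSt S i) rfl (by omega)).2

lemma aSt_notMem (h1 : aSt S i ≤ k) (h2 : k < i) : k ∉ S := by
  intro hk
  unfold aSt at h1
  exact Nat.findGreatest_is_greatest (P := fun j => 0 < j ∧ j - 1 ∈ S) (n := i) (k := k + 1)
    (by omega) (by omega) ⟨by omega, by simpa using hk⟩

lemma aSt_eq (ha : a ≤ i) (h1 : a = 0 ∨ a - 1 ∈ S)
    (h2 : ∀ k, a ≤ k → k < i → k ∉ S) : aSt S i = a := by
  have hge : a ≤ aSt S i := by
    rcases h1 with h | h
    · omega
    · rcases Nat.eq_zero_or_pos a with h0 | h0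
      · omega
      · exact Nat.le_findGreatest (P := fun j => 0 < j ∧ j - 1 ∈ S) ha ⟨h0, h⟩
  rcases lt_or_eq_of_le hge with h | h
  · exfalso
    have hmem : aSt S i - 1 ∈ S := by
      rcases aSt_mem (S := S) (i := i) with h0 | h0
      · omega
      · exact h0
    exact h2 _ (by omega) (by have := aSt_le (S := S) (i := i); omega) hmem
  · exact h.symm

lemma block_const (hi : i < n) (hj1 : aSt S i ≤ j) (hj2 : j ≤ bEn n S i) :
    aSt S j = aSt S i ∧ bEn n S j = bEn n S i := by
  have hai : aSt S i ≤ i := aSt_le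
  have hbi : i ≤ bEn n S i := le_bEn
  constructor
  · refine aSt_eq hj1 aSt_mem ?_
    intro k hk1 hk2
    rcases lt_or_ge k i with h | h
    · exact aSt_notMem hk1 h
    · exact bEn_notMem (n := n) h (by omega)
  · refine bEn_eq hj2 (bEn_lt hi) bEn_mem ?_
    intro k hk1 hk2
    rcases lt_or_ge k i with h | h
    · exact aSt_notMem (by omega) h
    · exact bEn_notMem (n := n) h hk2

lemma block_cases (hij : i ≤ j) (hj : j < n) :
    (aSt S i = aSt S j ∧ bEn n S i = bEn n S j) ∨ bEn n S i < aSt S j := by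
  by_cases h : aSt S j ≤ i
  · left
    exact block_const (S := S) hj h (le_trans hij le_bEn)
  · right
    push_neg at h
    by_contra hb
    push_neg at hb
    have h0 : 0 < aSt S j := by omega
    have hmem : aSt S j - 1 ∈ S := by
      rcases aSt_mem (S := S) (i := j) with h1 | h1
      · omega
      · exact h1
    exact bEn_notMem (n := n) (i := i) (k := aSt S j - 1) (by omega) (by omega) hmem

/-- The block-reversal map determined by `S`. -/
def gfun (n : ℕ) (S : Finset ℕ) : Fin n → Fin n := fun i =>
  ⟨aSt S i + bEn n S i - i, by
    have h1 := bEn_lt (S := S) i.isLt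
    have h2 := aSt_le (S := S) (i := (i : ℕ))
    omega⟩

lemma gfun_val (i : Fin n) : (gfun n S i : ℕ) = aSt S i + bEn n S i - i := rfl

lemma gfun_mem (i : Fin n) :
    aSt S (i : ℕ) ≤ (gfun n S i : ℕ) ∧ (gfun n S i : ℕ) ≤ bEn n S i := by
  have h1 := le_bEn (n := n) (S := S) (i := (i : ℕ))
  have h2 := aSt_le (S := S) (i := (i : ℕ))
  rw [gfun_val]
  omega

lemma gfun_inv : Function.Involutive (gfun n S) := by
  intro i
  have h1 := le_bEn (n := n) (S := S) (i := (i : ℕ))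
  have h2 := aSt_le (S := S) (i := (i : ℕ))
  have hm := gfun_mem (n := n) (S := S) i
  have hc := block_const (S := S) i.isLt hm.1 hm.2
  apply Fin.ext
  show aSt S ((gfun n S i : ℕ)) + bEn n S ((gfun n S i : ℕ)) - ((gfun n S i : ℕ)) = (i : ℕ)
  rw [hc.1, hc.2]
  have e1 : ((gfun n S i : ℕ)) = aSt S (i : ℕ) + bEn n S (i : ℕ) - (i : ℕ) := rfl
  omega

/-- The block-reversal permutation. -/
def gperm (n : ℕ) (S : Finset ℕ) : Equiv.Perm (Fin n) :=
  (gfun_inv (n := n) (S := S)).toPerm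

lemma gperm_apply (i : Fin n) : gperm n S i = gfun n S i := rfl

lemma gfun_order {i j : Fin n} (hij : i < j) :
    (bEn n S (i : ℕ) < aSt S (j : ℕ) ∧ (gfun n S i : ℕ) < gfun n S j) ∨
    ((aSt S (i : ℕ) = aSt S (j : ℕ) ∧ bEn n S (i : ℕ) = bEn n S (j : ℕ)) ∧
      (gfun n S j : ℕ) < gfun n S i) := by
  have hij' : (i : ℕ) ≤ (j : ℕ) := le_of_lt hij
  rcases block_cases (S := S) hij' j.isLt with h | h
  · right
    refine ⟨h, ?_⟩
    rw [gfun_val, gfun_val, ← h.1, ← h.2]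
    have h1 := le_bEn (n := n) (S := S) (i := (i : ℕ))
    have h2 := aSt_le (S := S) (i := (i : ℕ))
    have h3 : (j : ℕ) ≤ bEn n S (j : ℕ) := le_bEn
    have h4 : (j : ℕ) ≤ bEn n S (i : ℕ) := by rw [h.2]; exact h3
    have h5 : (i : ℕ) < (j : ℕ) := hij
    omega
  · left
    refine ⟨h, ?_⟩
    have h1 := (gfun_mem (n := n) (S := S) i).2
    have h2 := (gfun_mem (n := n) (S := S) j).1
    omega

lemma gperm_avoids231 : Avoids231 (gperm n S) := by
  rintro ⟨i, j, k, hij, hjk, h1, h2⟩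
  rw [Fin.lt_def] at h1 h2
  simp only [gperm_apply] at h1 h2
  rcases gfun_order (S := S) hij with h | h
  · have hjk' : aSt S (j : ℕ) ≤ aSt S (k : ℕ) := by
      rcases block_cases (S := S) (le_of_lt (Fin.lt_def.1 hjk)) k.isLt with hc | hc
      · omega
      · have ha := aSt_le (S := S) (i := (j : ℕ))
        have hb := le_bEn (n := n) (S := S) (i := (j : ℕ))
        omega
    have hk1 := (gfun_mem (n := n) (S := S) k).1
    have hi1 := (gfun_mem (n := n) (S := S) i).2
    omega
  · omega

lemma gperm_avoids312 : Avoids312 (gperm n S) := by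
  rintro ⟨i, j, k, hij, hjk, h1, h2⟩
  rw [Fin.lt_def] at h1 h2
  simp only [gperm_apply] at h1 h2
  rcases gfun_order (S := S) hij with h | h
  · omega
  · rcases gfun_order (S := S) hjk with hc | hc
    · have hk1 := (gfun_mem (n := n) (S := S) k).1
      have hi1 := (gfun_mem (n := n) (S := S) i).2
      omega
    · omega

lemma pv_def {π : Equiv.Perm (Fin n)} (h : i < n) : pv π i = (π ⟨i, h⟩ : ℕ) := by
  simp [pv, h]

lemma pv_lt_n {π : Equiv.Perm (Fin n)} (h : i < n) : pv π i < n := by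
  rw [pv_def h]; exact (π ⟨i, h⟩).isLt

lemma pv_inj {π : Equiv.Perm (Fin n)} (hi : i < n) (hj : j < n)
    (h : pv π i = pv π j) : i = j := by
  rw [pv_def hi, pv_def hj] at h
  have h2 := π.injective (Fin.val_injective h)
  exact congrArg Fin.val h2

lemma pv_gperm (h : i < n) : pv (gperm n S) i = aSt S i + bEn n S i - i := by
  rw [pv_def h]; rfl

lemma ascents_gperm (hS : S ⊆ Finset.range (n - 1)) : ascents (gperm n S) = S := by
  ext i
  simp only [ascents, Finset.mem_filter, Finset.mem_range]
  constructor
  · rintro ⟨hi, hasc⟩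
    by_contra hiS
    have hi1 : i < n := by omega
    have hi2 : i + 1 < n := by omega
    have hb : i + 1 ≤ bEn n S i := by
      have h1 := le_bEn (n := n) (S := S) (i := i)
      rcases Nat.lt_or_ge i (bEn n S i) with h | h
      · omega
      · exfalso
        have hbe : bEn n S i = i := by omega
        rcases bEn_mem (n := n) (S := S) (i := i) with hm | hm
        · exact hiS (hbe ▸ hm)
        · omega
    have hc := block_const (S := S) hi1 (j := i + 1) (le_trans aSt_le (by omega)) hb
    rw [pv_gperm hi1, pv_gperm hi2, hc.1, hc.2] at hasc
    have h2 := aSt_le (S := S) (i := i)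
    omega
  · intro hiS
    have hir := Finset.mem_range.1 (hS hiS)
    have hi1 : i < n := by omega
    have hi2 : i + 1 < n := by omega
    refine ⟨hir, ?_⟩
    rw [pv_gperm hi1, pv_gperm hi2]
    have hbi : bEn n S i = i := bEn_eq le_rfl hi1 (Or.inl hiS) (by omega)
    have hai : aSt S (i + 1) = i + 1 := aSt_eq le_rfl (Or.inr (by simpa using hiS)) (by omega)
    have h2 := aSt_le (S := S) (i := i)
    have h3 := le_bEn (n := n) (S := S) (i := i + 1)
    omega

section Avoider

variable {π : Equiv.Perm (Fin n)}

/-- descent steps go down by exactly 1 -/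
lemma step_desc (h231 : Avoids231 π) (h312 : Avoids312 π)
    (h : i + 1 < n) (hd : i ∉ ascents π) : pv π i = pv π (i + 1) + 1 := by
  have hi : i < n := by omega
  have hne : pv π (i + 1) ≠ pv π i := fun he => by
    have := pv_inj (π := π) h hi he; omega
  have hnl : ¬ pv π i < pv π (i + 1) := fun ha =>
    hd (Finset.mem_filter.2 ⟨Finset.mem_range.2 (by omega), ha⟩)
  by_contra hne1
  have hv : pv π (i + 1) + 1 < pv π i := by omega
  have hvn : pv π (i + 1) + 1 < n := lt_trans hv (pv_lt_n hi)
  set K : Fin n := π.symm ⟨pv π (i + 1) + 1, hvn⟩ with hK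
  have hvK : (π K : ℕ) = pv π (i + 1) + 1 := by
    have h0 : π K = ⟨pv π (i + 1) + 1, hvn⟩ := π.apply_symm_apply _
    rw [h0]
  have hpvK : pv π (K : ℕ) = pv π (i + 1) + 1 := by
    rw [pv_def K.isLt, Fin.eta]; exact hvK
  have hv1 : (π ⟨i, hi⟩ : ℕ) = pv π i := (pv_def hi).symm
  have hv2 : (π ⟨i + 1, h⟩ : ℕ) = pv π (i + 1) := (pv_def h).symm
  rcases lt_trichotomy (K : ℕ) i with hc | hc | hc
  · refine h231 ⟨K, ⟨i, hi⟩, ⟨i + 1, h⟩, ?_, ?_, ?_, ?_⟩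
    · show (K : ℕ) < i; omega
    · show i < i + 1; omega
    · show (π ⟨i + 1, h⟩ : ℕ) < (π K : ℕ); omega
    · show (π K : ℕ) < (π ⟨i, hi⟩ : ℕ); omega
  · exfalso
    rw [hc] at hpvK
    omega
  · by_cases hke : (K : ℕ) = i + 1
    · rw [hke] at hpvK; omega
    · have hc2 : i + 1 < (K : ℕ) := by omega
      refine h312 ⟨⟨i, hi⟩, ⟨i + 1, h⟩, K, ?_, ?_, ?_, ?_⟩
      · show i < i + 1; omega
      · show i + 1 < (K : ℕ); omega
      · show (π ⟨i + 1, h⟩ : ℕ) < (π K : ℕ); omega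
      · show (π K : ℕ) < (π ⟨i, hi⟩ : ℕ); omega

/-- everything before an ascent top is smaller -/
lemma step_asc (h312 : Avoids312 π) (ha : i ∈ ascents π) (hj : j ≤ i) :
    pv π j < pv π (i + 1) := by
  have hmem := Finset.mem_filter.1 ha
  have hir := Finset.mem_range.1 hmem.1
  have h1 : i + 1 < n := by omega
  rcases eq_or_lt_of_le hj with he | hlt
  · subst he; exact hmem.2
  · by_contra hc
    have hjn : j < n := by omega
    have hne : pv π j ≠ pv π (i + 1) := fun he => by
      have := pv_inj (π := π) hjn h1 he; omega
    have hlt2 : pv π (i + 1) < pv π j := by omega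
    have hv1 : (π ⟨i, by omega⟩ : ℕ) = pv π i := (pv_def (by omega)).symm
    have hv2 : (π ⟨i + 1, h1⟩ : ℕ) = pv π (i + 1) := (pv_def h1).symm
    have hv3 : (π ⟨j, hjn⟩ : ℕ) = pv π j := (pv_def hjn).symm
    refine h312 ⟨⟨j, hjn⟩, ⟨i, by omega⟩, ⟨i + 1, h1⟩, ?_, ?_, ?_, ?_⟩
    · show j < i; omega
    · show i < i + 1; omega
    · show (π ⟨i, by omega⟩ : ℕ) < (π ⟨i + 1, h1⟩ : ℕ)
      have hv4 : (π ⟨i, by omega⟩ : ℕ) = pv π i := (pv_def (by omega)).symm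
      have := hmem.2
      omega
    · show (π ⟨i + 1, h1⟩ : ℕ) < (π ⟨j, hjn⟩ : ℕ); omega

lemma pv_avoid_eq (h231 : Avoids231 π) (h312 : Avoids312 π) :
    ∀ i, i < n → pv π i = aSt (ascents π) i + bEn n (ascents π) i - i := by
  intro i
  induction i using Nat.strong_induction_on with
  | _ i IH =>
  intro hi
  set S := ascents π with hSdef
  by_cases hblock : aSt S i = i
  · -- block start
    set b := bEn n S i with hbdef
    have hab : i ≤ b := le_bEn
    have hbn : b < n := bEn_lt hi
    have hQ : ∀ j, j < i → pv π j < i := by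
      intro j hj
      have hjn : j < n := by omega
      have hIHj := IH j hj hjn
      have hbj : bEn n S j < i := by
        by_contra hge
        push_neg at hge
        have hnot : i - 1 ∉ S := bEn_notMem (n := n) (i := j) (by omega) (by omega)
        have hmem : i - 1 ∈ S := by
          rcases aSt_mem (S := S) (i := i) with h0 | h0
          · exfalso; omega
          · rw [hblock] at h0; exact h0
        exact hnot hmem
      have ha1 := aSt_le (S := S) (i := j)
      have hb1 := le_bEn (n := n) (S := S) (i := j)
      omega
    have hchain : ∀ d, i + d ≤ b → pv π (i + d) + d = pv π i := by
      intro d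
      induction d with
      | zero => intro _; simp
      | succ d IHd =>
        intro hd
        have h1 : i + d < b := by omega
        have hnotS : i + d ∉ S := bEn_notMem (n := n) (by omega) h1
        have hlt : i + d + 1 < n := by omega
        have hstep := step_desc h231 h312 hlt hnotS
        have h2 := IHd (by omega)
        have h3 : pv π (i + (d + 1)) = pv π (i + d + 1) := rfl
        omega
    have hvals : ∀ v : Fin n, (v : ℕ) < i → ∃ j : Fin n, (j : ℕ) < i ∧ π j = v := by
      intro v hv
      classical
      set T : Finset (Fin n) := Finset.univ.filter (fun j : Fin n => (j : ℕ) < i) with hT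
      have hsub : T.image π ⊆ T := by
        intro x hx
        rw [Finset.mem_image] at hx
        obtain ⟨j, hjT, hjx⟩ := hx
        rw [hT, Finset.mem_filter] at hjT
        rw [hT, Finset.mem_filter]
        refine ⟨Finset.mem_univ _, ?_⟩
        have hq := hQ (j : ℕ) hjT.2
        rw [pv_def j.isLt, Fin.eta] at hq
        rw [← hjx]
        exact hq
      have hcard : (T.image π).card = T.card := Finset.card_image_of_injective _ π.injective
      have heq : T.image π = T := Finset.eq_of_subset_of_card_le hsub hcard.ge
      have hvT : v ∈ T := by rw [hT, Finset.mem_filter]; exact ⟨Finset.mem_univ _, hv⟩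
      rw [← heq, Finset.mem_image] at hvT
      obtain ⟨j, hjT, hj⟩ := hvT
      rw [hT, Finset.mem_filter] at hjT
      exact ⟨j, hjT.2, hj⟩
    have hcb := hchain (b - i) (by omega)
    rw [show i + (b - i) = b from by omega] at hcb
    have hlow : b ≤ pv π i := by
      by_contra hc
      push_neg at hc
      have hpb : pv π b < i := by omega
      obtain ⟨j, hji, hj⟩ := hvals (π ⟨b, hbn⟩) (by rw [← pv_def hbn]; exact hpb)
      have hj2 : j = ⟨b, hbn⟩ := π.injective hj
      have := congrArg Fin.val hj2
      simp at this
      omega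
    have hup : pv π i ≤ b := by
      by_contra hc
      push_neg at hc
      have hbS : b ∈ S := by
        rcases bEn_mem (n := n) (S := S) (i := i) with h0 | h0
        · exact h0
        · exfalso; have := pv_lt_n (π := π) hi; omega
      have hbr : b < n - 1 := Finset.mem_range.1 (Finset.mem_filter.1 hbS).1
      have hb1 : b + 1 < n := by omega
      have hL2 : pv π i < pv π (b + 1) := step_asc h312 hbS hab
      set K : Fin n := π.symm ⟨i, hi⟩ with hK
      have hvK : pv π (K : ℕ) = i := by
        rw [pv_def K.isLt, Fin.eta]
        have h0 : π K = ⟨i, hi⟩ := π.apply_symm_apply _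
        rw [h0]
      have hKgt : b + 1 < (K : ℕ) := by
        rcases Nat.lt_or_ge (K : ℕ) i with h0 | h0
        · have := hQ _ h0; omega
        · rcases Nat.lt_or_ge b (K : ℕ) with h1 | h1
          · rcases Nat.lt_or_ge (b + 1) (K : ℕ) with h2 | h2
            · exact h2
            · exfalso
              have hKb : (K : ℕ) = b + 1 := by omega
              rw [hKb] at hvK
              omega
          · exfalso
            have hch := hchain ((K : ℕ) - i) (by omega)
            rw [show i + ((K : ℕ) - i) = (K : ℕ) from by omega] at hch
            omega
      have hv1 : (π ⟨i, hi⟩ : ℕ) = pv π i := (pv_def hi).symm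
      have hv2 : (π ⟨b + 1, hb1⟩ : ℕ) = pv π (b + 1) := (pv_def hb1).symm
      have hv3 : (π K : ℕ) = pv π (K : ℕ) := by rw [pv_def K.isLt, Fin.eta]
      refine h231 ⟨⟨i, hi⟩, ⟨b + 1, hb1⟩, K, ?_, ?_, ?_, ?_⟩
      · show i < b + 1; omega
      · show b + 1 < (K : ℕ); omega
      · show (π K : ℕ) < (π ⟨i, hi⟩ : ℕ); omega
      · show (π ⟨i, hi⟩ : ℕ) < (π ⟨b + 1, hb1⟩ : ℕ); omega
    omega
  · -- not a block start
    have ha := aSt_le (S := S) (i := i)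
    have hlt : aSt S i < i := lt_of_le_of_ne ha hblock
    have hi0 : 0 < i := by omega
    have hnotS : i - 1 ∉ S := aSt_notMem (S := S) (i := i) (by omega) (by omega)
    have hd : pv π (i - 1) = pv π i + 1 := by
      have hst := step_desc h231 h312 (i := i - 1) (by omega) hnotS
      rw [show i - 1 + 1 = i from by omega] at hst
      exact hst
    have hIH := IH (i - 1) (by omega) (by omega)
    have hc := block_const (S := S) hi (j := i - 1) (by omega)
      (by have := le_bEn (n := n) (S := S) (i := i); omega)
    rw [hc.1, hc.2] at hIH
    have hbe := le_bEn (n := n) (S := S) (i := i)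
    omega

lemma gperm_ascents (h231 : Avoids231 π) (h312 : Avoids312 π) :
    gperm n (ascents π) = π := by
  apply Equiv.ext
  intro i
  apply Fin.ext
  rw [gperm_apply, gfun_val]
  have h := pv_avoid_eq h231 h312 (i : ℕ) i.isLt
  rw [pv_def i.isLt, Fin.eta] at h
  omega

end Avoider

end AvoidAux

theorem card_avoid_231_312 (n : ℕ) (hn : 1 ≤ n) :
    Nat.card {π : Equiv.Perm (Fin n) // Avoids231 π ∧ Avoids312 π} = 2 ^ (n - 1) := by
  classical
  have e : {π : Equiv.Perm (Fin n) // Avoids231 π ∧ Avoids312 π} ≃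
      ((Finset.range (n - 1)).powerset : Finset (Finset ℕ)) :=
    { toFun := fun p => ⟨ascents p.1, Finset.mem_powerset.2 (Finset.filter_subset _ _)⟩
      invFun := fun S => ⟨AvoidAux.gperm n S.1, AvoidAux.gperm_avoids231, AvoidAux.gperm_avoids312⟩
      left_inv := fun p => Subtype.ext (AvoidAux.gperm_ascents p.2.1 p.2.2)
      right_inv := fun S => Subtype.ext (AvoidAux.ascents_gperm (Finset.mem_powerset.1 S.2)) }
  rw [Nat.card_congr e, Nat.card_eq_finsetCard, Finset.card_powerset, Finset.card_range]
end

section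
/- The number of permutations of length n avoiding both patterns 132 and 321 is 1 + n(n-1)/2 for all n ≥ 1. -/
def rotf (n s t : ℕ) : Fin n → Fin n := fun i =>
  if (i : ℕ) < t then ⟨(i + s) % t % n, Nat.mod_lt _ i.pos⟩ else i

lemma rotf_coe {n : ℕ} (s t : ℕ) (ht : t ≤ n) (i : Fin n) :
    (rotf n s t i : ℕ) = if (i : ℕ) < t then ((i : ℕ) + s) % t else i := by
  unfold rotf
  split_ifs with h
  · have htpos : 0 < t := by omega
    simp [Nat.mod_eq_of_lt (lt_of_lt_of_le (Nat.mod_lt _ htpos) ht)]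
  · rfl

lemma rotf_inj {n : ℕ} (s t : ℕ) (ht : t ≤ n) : Function.Injective (rotf n s t) := by
  intro i j hEq
  have hv : (rotf n s t i : ℕ) = rotf n s t j := by rw [hEq]
  rw [rotf_coe s t ht, rotf_coe s t ht] at hv
  apply Fin.ext
  split_ifs at hv with h1 h2 h2
  · have htpos : 0 < t := by omega
    have h3 : ((i : ℕ) + s) ≡ ((j : ℕ) + s) [MOD t] := hv
    have h4 := Nat.ModEq.add_right_cancel' s h3
    unfold Nat.ModEq at h4
    rwa [Nat.mod_eq_of_lt h1, Nat.mod_eq_of_lt h2] at h4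
  · have htpos : 0 < t := by omega
    have := Nat.mod_lt ((i : ℕ) + s) htpos
    omega
  · have htpos : 0 < t := by omega
    have := Nat.mod_lt ((j : ℕ) + s) htpos
    omega
  · exact hv

noncomputable def rotp (n s t : ℕ) : Equiv.Perm (Fin n) :=
  if ht : t ≤ n then
    Equiv.ofBijective _ ((Finite.injective_iff_bijective).mp (rotf_inj s t ht))
  else 1

lemma rotp_apply {n : ℕ} {s t : ℕ} (ht : t ≤ n) (i : Fin n) :
    rotp n s t i = rotf n s t i := by
  unfold rotp
  rw [dif_pos ht]
  rfl

lemma rotp_coe {n : ℕ} {s t : ℕ} (hs : s < t) (ht : t ≤ n) (i : Fin n) :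
    (rotp n s t i : ℕ) =
      if (i : ℕ) + s < t then (i : ℕ) + s
      else if (i : ℕ) < t then (i : ℕ) + s - t else i := by
  rw [rotp_apply ht, rotf_coe s t ht]
  by_cases hi : (i : ℕ) < t
  · rw [if_pos hi]
    have : ((i : ℕ) + s) % t = if (i : ℕ) + s < t then (i : ℕ) + s else (i : ℕ) + s - t := by
      split_ifs with h
      · exact Nat.mod_eq_of_lt h
      · rw [Nat.mod_eq_sub_mod (by omega), Nat.mod_eq_of_lt (by omega)]
    rw [this]
    split_ifs <;> omega
  · rw [if_neg hi]
    split_ifs <;> omega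

lemma rotp_avoids {n : ℕ} {s t : ℕ} (hs : s < t) (ht : t ≤ n) :
    Avoids132 (rotp n s t) ∧ Avoids321 (rotp n s t) := by
  constructor
  · rintro ⟨i, j, k, hij, hjk, h1, h2⟩
    have vi := rotp_coe hs ht i
    have vj := rotp_coe hs ht j
    have vk := rotp_coe hs ht k
    rw [Fin.lt_def] at hij hjk h1 h2
    split_ifs at vi vj vk <;> omega
  · rintro ⟨i, j, k, hij, hjk, h1, h2⟩
    have vi := rotp_coe hs ht i
    have vj := rotp_coe hs ht j
    have vk := rotp_coe hs ht k
    rw [Fin.lt_def] at hij hjk h1 h2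
    split_ifs at vi vj vk <;> omega

lemma rotp_zero {n : ℕ} {s t : ℕ} (hs : s < t) (ht : t ≤ n) (h0 : 0 < n) :
    (rotp n s t ⟨0, h0⟩ : ℕ) = s := by
  rw [rotp_coe hs ht]
  simp only []
  split_ifs <;> omega

lemma rotp_t_le {n : ℕ} {s t t' : ℕ} (hs1 : 1 ≤ s) (hs : s < t) (ht : t ≤ n)
    (hs' : s < t') (ht' : t' ≤ n) (h : rotp n s t = rotp n s t') : t ≤ t' := by
  have ha : t - s < n := by omega
  have e : (rotp n s t ⟨t - s, ha⟩ : ℕ) = rotp n s t' ⟨t - s, ha⟩ := by rw [h]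
  rw [rotp_coe hs ht, rotp_coe hs' ht'] at e
  simp only [Fin.val_mk] at e
  split_ifs at e <;> omega

lemma rotp_inj_param {n : ℕ} {s t s' t' : ℕ} (hs : s < t) (ht : t ≤ n) (hc : s = 0 → t = n)
    (hs' : s' < t') (ht' : t' ≤ n) (hc' : s' = 0 → t' = n)
    (h : rotp n s t = rotp n s' t') : s = s' ∧ t = t' := by
  have h0 : 0 < n := by omega
  have hss : s = s' := by
    have e : (rotp n s t ⟨0, h0⟩ : ℕ) = rotp n s' t' ⟨0, h0⟩ := by rw [h]
    rwa [rotp_zero hs ht h0, rotp_zero hs' ht' h0] at e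
  subst hss
  rcases Nat.eq_zero_or_pos s with h0s | h0s
  · exact ⟨rfl, by rw [hc h0s, hc' h0s]⟩
  · exact ⟨rfl, le_antisymm (rotp_t_le h0s hs ht hs' ht' h)
      (rotp_t_le h0s hs' ht' hs ht h.symm)⟩

lemma id_tail {n : ℕ} (π : Equiv.Perm (Fin n)) (t : ℕ)
    (h1' : ∀ i : Fin n, (i : ℕ) < t → (π i : ℕ) < t)
    (h1 : ∀ i : Fin n, t ≤ (i : ℕ) → t ≤ (π i : ℕ))
    (h2 : ∀ i j : Fin n, t ≤ (i : ℕ) → (i : ℕ) < (j : ℕ) → (π i : ℕ) < (π j : ℕ)) :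
    ∀ i : Fin n, t ≤ (i : ℕ) → π i = i := by
  suffices H : ∀ v : ℕ, ∀ i : Fin n, (i : ℕ) = v → t ≤ v → π i = i by
    intro i hi; exact H (i : ℕ) i rfl hi
  intro v
  induction v using Nat.strong_induction_on with
  | _ v ih =>
    intro i hiv htv
    set p : Fin n := π.symm i with hp
    have hπp : π p = i := π.apply_symm_apply i
    have hpt : t ≤ (p : ℕ) := by
      by_contra hc
      have := h1' p (by omega)
      rw [hπp] at this; omega
    rcases lt_trichotomy ((p : ℕ)) ((i : ℕ)) with hlt | heq | hgt
    · have := ih (p : ℕ) (by omega) p rfl hpt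
      rw [this] at hπp
      exact absurd (congrArg Fin.val hπp) (by omega)
    · have hpi : p = i := Fin.ext heq
      rw [hpi] at hπp; exact hπp
    · -- p > i; consider v' := π i
      by_contra hne
      have hvt : t ≤ (π i : ℕ) := h1 i (by omega)
      -- π i ≥ t, π i ≠ i
      have hvi : (π i : ℕ) ≠ (i : ℕ) := fun hh => hne (Fin.ext hh)
      rcases lt_or_gt_of_ne hvi with hlt2 | hgt2
      · -- value π i < i: position of value π i is i, but by ih value (π i) sits at itself
        have := ih ((π i : ℕ)) (by omega) ⟨(π i : ℕ), (π i).isLt⟩ rfl (by omega)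
        have h5 : π ⟨(π i : ℕ), (π i).isLt⟩ = π i := by rw [this]
        have h6 := π.injective h5
        exact hvi (congrArg Fin.val h6)
      · have := h2 i p (by omega) hgt
        rw [hπp] at this
        omega

lemma structure_thm {n : ℕ} (h0 : 0 < n) (π : Equiv.Perm (Fin n))
    (h132 : Avoids132 π) (h321 : Avoids321 π) :
    ∃ s t, s < t ∧ t ≤ n ∧ (s = 0 → t = n) ∧ π = rotp n s t := by
  have no132 : ∀ i j k : Fin n, (i:ℕ) < (j:ℕ) → (j:ℕ) < (k:ℕ) →
      (π i : ℕ) < (π k : ℕ) → (π k : ℕ) < (π j : ℕ) → False :=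
    fun i j k hij hjk h1 h2 => h132 ⟨i, j, k, hij, hjk, h1, h2⟩
  have no321 : ∀ i j k : Fin n, (i:ℕ) < (j:ℕ) → (j:ℕ) < (k:ℕ) →
      (π k : ℕ) < (π j : ℕ) → (π j : ℕ) < (π i : ℕ) → False :=
    fun i j k hij hjk h1 h2 => h321 ⟨i, j, k, hij, hjk, h1, h2⟩
  by_cases hs0 : (π ⟨0, h0⟩ : ℕ) = 0
  · refine ⟨0, n, h0, le_rfl, fun _ => rfl, ?_⟩
    have h2 : ∀ i j : Fin n, (0:ℕ) ≤ (i:ℕ) → (i:ℕ) < (j:ℕ) → (π i : ℕ) < (π j : ℕ) := by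
      intro i j _ hij
      by_contra hc
      push_neg at hc
      have hnev : (π i : ℕ) ≠ (π j : ℕ) := fun hh => by
        have := congrArg Fin.val (π.injective (Fin.ext hh)); omega
      have hj0 : (π j : ℕ) ≠ 0 := by
        intro hh
        have h3 : π j = π ⟨0, h0⟩ := Fin.ext (by omega)
        have h4 := congrArg Fin.val (π.injective h3)
        have h5 : ((⟨0, h0⟩ : Fin n) : ℕ) = 0 := rfl
        omega
      have hi0 : 0 < (i : ℕ) := by
        rcases Nat.eq_zero_or_pos ((i:ℕ)) with h | h
        · exfalso
          have : i = ⟨0, h0⟩ := Fin.ext h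
          rw [this] at hc hnev
          omega
        · exact h
      exact no132 ⟨0, h0⟩ i j hi0 hij (by omega) (by omega)
    have htail := id_tail π 0 (fun i hi => absurd hi (by omega)) (fun i _ => Nat.zero_le _)
      (fun i j _ hij => h2 i j (Nat.zero_le _) hij)
    apply Equiv.ext
    intro i
    have hrv := rotp_coe (s := 0) (t := n) h0 le_rfl i
    have hid := congrArg Fin.val (htail i (Nat.zero_le _))
    have hlt := i.isLt
    apply Fin.ext
    rw [hrv]
    split_ifs <;> omega
  · set z : Fin n := ⟨0, h0⟩ with hzdef
    set s : ℕ := (π z : ℕ) with hsdef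
    have hs1 : 1 ≤ s := by omega
    have hs_lt : s < n := (π z).isLt
    set mz : Fin n := π.symm z with hmzdef
    set m : ℕ := (mz : ℕ) with hmdef
    have hπm : π mz = z := π.apply_symm_apply z
    have hπmv : (π mz : ℕ) = 0 := by rw [hπm]
    have hm_lt : m < n := mz.isLt
    have hm1 : 1 ≤ m := by
      rcases Nat.eq_zero_or_pos m with h | h
      · exfalso
        have : mz = z := Fin.ext (by omega)
        rw [this] at hπmv
        omega
      · exact h
    -- Claim A : π(i) = s + i for i < m
    have hA : ∀ i, ∀ hi : i < n, i < m → (π ⟨i, hi⟩ : ℕ) = s + i := by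
      intro i
      induction i using Nat.strong_induction_on with
      | _ i ih =>
        intro hi him
        rcases i with _ | i'
        · rw [show (⟨0, hi⟩ : Fin n) = z from rfl]
          omega
        · have hi' : i' < n := by omega
          have hprev := ih i' (by omega) hi' (by omega)
          have hne0 : (π ⟨i'+1, hi⟩ : ℕ) ≠ 0 := by
            intro hv
            have h3 : π ⟨i'+1, hi⟩ = π mz := Fin.ext (by omega)
            have h4 := congrArg Fin.val (π.injective h3)
            have h5 : ((⟨i'+1, hi⟩ : Fin n) : ℕ) = i'+1 := rfl
            omega
          have hgtprev : (π ⟨i', hi'⟩ : ℕ) < (π ⟨i'+1, hi⟩ : ℕ) := by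
            by_contra hc
            push_neg at hc
            have hnev : (π ⟨i'+1, hi⟩ : ℕ) ≠ (π ⟨i', hi'⟩ : ℕ) := fun hh => by
              have := congrArg Fin.val (π.injective (Fin.ext hh))
              have h5 : ((⟨i'+1, hi⟩ : Fin n) : ℕ) = i'+1 := rfl
              have h6 : ((⟨i', hi'⟩ : Fin n) : ℕ) = i' := rfl
              omega
            exact no321 ⟨i', hi'⟩ ⟨i'+1, hi⟩ mz (Nat.lt_succ_self i')
              (show i'+1 < (mz:ℕ) by omega) (by omega) (by omega)
          have hub : (π ⟨i'+1, hi⟩ : ℕ) ≤ s + i' + 1 := by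
            by_contra hgt
            push_neg at hgt
            have hvlt : s + i' + 1 < n := by
              have := (π ⟨i'+1, hi⟩).isLt; omega
            set q : Fin n := π.symm ⟨s+i'+1, hvlt⟩ with hq
            have hπq : π q = ⟨s+i'+1, hvlt⟩ := π.apply_symm_apply _
            have hπqv : (π q : ℕ) = s+i'+1 := by rw [hπq]
            rcases lt_trichotomy ((q:ℕ)) (i'+1) with h | h | h
            · have h7 := ih (q:ℕ) (by omega) q.isLt (by omega)
              rw [show (⟨(q:ℕ), q.isLt⟩ : Fin n) = q from rfl] at h7
              omega
            · have : q = ⟨i'+1, hi⟩ := Fin.ext h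
              rw [this] at hπqv
              omega
            · rcases lt_trichotomy ((q:ℕ)) m with h2 | h2 | h2
              · exact no321 ⟨i'+1, hi⟩ q mz (show i'+1 < (q:ℕ) from h)
                  (show (q:ℕ) < (mz:ℕ) by omega) (by omega) (by omega)
              · have : q = mz := Fin.ext (by omega)
                rw [this] at hπqv
                omega
              · exact no132 ⟨i', hi'⟩ ⟨i'+1, hi⟩ q (Nat.lt_succ_self i')
                  (show i'+1 < (q:ℕ) from h) (by omega) (by omega)
          omega
    -- Claim B : π(m+r) = r for r < s
    have hB : ∀ r, r < s → ∃ hh : m + r < n, (π ⟨m + r, hh⟩ : ℕ) = r := by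
      intro r
      induction r using Nat.strong_induction_on with
      | _ r ih =>
        intro hrs
        rcases r with _ | r
        · refine ⟨by omega, ?_⟩
          rw [show (⟨m + 0, by omega⟩ : Fin n) = mz from Fin.ext (show m + 0 = (mz:ℕ) by omega)]
          exact hπmv
        · obtain ⟨hmr, hvr⟩ := ih r (by omega) (by omega)
          have hr1n : r + 1 < n := by omega
          set k : Fin n := π.symm ⟨r+1, hr1n⟩ with hk
          have hπk : π k = ⟨r+1, hr1n⟩ := π.apply_symm_apply _
          have hπkv : (π k : ℕ) = r + 1 := by rw [hπk]
          have hkgt : m + r < (k : ℕ) := by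
            by_contra hle
            push_neg at hle
            rcases lt_trichotomy ((k:ℕ)) m with h | h | h
            · rcases Nat.eq_zero_or_pos ((k:ℕ)) with h0k | h0k
              · have : k = z := Fin.ext (show (k:ℕ) = (z:ℕ) by omega)
                rw [this] at hπkv
                omega
              · have h7 := hA (k:ℕ) k.isLt h
                rw [show (⟨(k:ℕ), k.isLt⟩ : Fin n) = k from rfl] at h7
                omega
            · have : k = mz := Fin.ext (by omega)
              rw [this] at hπkv
              omega
            · obtain ⟨hh2, hv2⟩ := ih ((k:ℕ) - m) (by omega) (by omega)
              rw [show (⟨m + ((k:ℕ) - m), hh2⟩ : Fin n) = k from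
                Fin.ext (show m + ((k:ℕ)-m) = (k:ℕ) by omega)] at hv2
              omega
          have hmr1n : m + (r+1) < n := by have := k.isLt; omega
          rcases eq_or_lt_of_le (show m + r + 1 ≤ (k:ℕ) by omega) with heq | hlt
          · refine ⟨hmr1n, ?_⟩
            rw [show (⟨m + (r+1), hmr1n⟩ : Fin n) = k from
              Fin.ext (show m + (r+1) = (k:ℕ) by omega)]
            omega
          · exfalso
            set j : Fin n := ⟨m + r + 1, by omega⟩ with hj
            have hjv : (j : ℕ) = m + r + 1 := rfl
            have hwne : (π j : ℕ) ≠ r + 1 := by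
              intro hh
              have h3 : π j = π k := Fin.ext (by omega)
              have h4 := congrArg Fin.val (π.injective h3)
              omega
            rcases lt_trichotomy ((π j : ℕ)) s with hw | hw | hw
            · rcases Nat.lt_or_ge ((π j : ℕ)) (r+1) with hw2 | hw2
              · obtain ⟨hh3, hv3⟩ := ih ((π j : ℕ)) (by omega) (by omega)
                have h3 : π ⟨m + (π j : ℕ), hh3⟩ = π j := Fin.ext (by omega)
                have h4 := congrArg Fin.val (π.injective h3)
                have h5 : ((⟨m + (π j : ℕ), hh3⟩ : Fin n) : ℕ) = m + (π j : ℕ) := rfl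
                omega
              · exact no321 z j k (show (z:ℕ) < (j:ℕ) by omega)
                  (show (j:ℕ) < (k:ℕ) by omega) (by omega) (by omega)
            · have h3 : π j = π z := Fin.ext (by omega)
              have h4 := congrArg Fin.val (π.injective h3)
              omega
            · exact no132 mz j k (show (mz:ℕ) < (j:ℕ) by omega)
                (show (j:ℕ) < (k:ℕ) by omega) (by omega) (by omega)
    have hts : m + s ≤ n := by
      obtain ⟨hh, _⟩ := hB (s-1) (by omega)
      omega
    have h1' : ∀ i : Fin n, (i:ℕ) < m + s → (π i : ℕ) < m + s := by
      intro i hi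
      rcases Nat.lt_or_ge ((i:ℕ)) m with h | h
      · have h7 := hA (i:ℕ) i.isLt h
        rw [show (⟨(i:ℕ), i.isLt⟩ : Fin n) = i from rfl] at h7
        omega
      · obtain ⟨hh, hv⟩ := hB ((i:ℕ) - m) (by omega)
        rw [show (⟨m + ((i:ℕ)-m), hh⟩ : Fin n) = i from
          Fin.ext (show m + ((i:ℕ)-m) = (i:ℕ) by omega)] at hv
        omega
    have h1 : ∀ i : Fin n, m + s ≤ (i:ℕ) → m + s ≤ (π i : ℕ) := by
      intro i hi
      by_contra hc
      push_neg at hc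
      rcases Nat.lt_or_ge ((π i : ℕ)) s with h | h
      · obtain ⟨hh, hv⟩ := hB ((π i : ℕ)) h
        have h3 : π ⟨m + (π i : ℕ), hh⟩ = π i := Fin.ext (by omega)
        have h4 := congrArg Fin.val (π.injective h3)
        have h5 : ((⟨m + (π i : ℕ), hh⟩ : Fin n) : ℕ) = m + (π i : ℕ) := rfl
        omega
      · have hbn : (π i : ℕ) - s < n := by omega
        have hAv := hA ((π i : ℕ) - s) hbn (by omega)
        have h3 : π ⟨(π i : ℕ) - s, hbn⟩ = π i := Fin.ext (by omega)
        have h4 := congrArg Fin.val (π.injective h3)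
        have h5 : ((⟨(π i : ℕ) - s, hbn⟩ : Fin n) : ℕ) = (π i : ℕ) - s := rfl
        omega
    have h2 : ∀ i j : Fin n, m + s ≤ (i:ℕ) → (i:ℕ) < (j:ℕ) → (π i : ℕ) < (π j : ℕ) := by
      intro i j hi hij
      have hnev : (π i : ℕ) ≠ (π j : ℕ) := fun hh => by
        have := congrArg Fin.val (π.injective (Fin.ext hh)); omega
      by_contra hc
      push_neg at hc
      have hj1 := h1 j (by omega)
      exact no132 mz i j (by omega) hij (by omega) (by omega)
    have htail := id_tail π (m+s) h1' h1 h2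
    refine ⟨s, m + s, by omega, hts, by omega, ?_⟩
    apply Equiv.ext
    intro i
    have hrv := rotp_coe (show s < m + s by omega) hts i
    apply Fin.ext
    rw [hrv]
    rcases Nat.lt_or_ge ((i:ℕ)) m with h | h
    · have h7 := hA (i:ℕ) i.isLt h
      rw [show (⟨(i:ℕ), i.isLt⟩ : Fin n) = i from rfl] at h7
      split_ifs <;> omega
    · rcases Nat.lt_or_ge ((i:ℕ)) (m+s) with h2a | h2a
      · obtain ⟨hh, hv⟩ := hB ((i:ℕ) - m) (by omega)
        rw [show (⟨m + ((i:ℕ)-m), hh⟩ : Fin n) = i from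
          Fin.ext (show m + ((i:ℕ)-m) = (i:ℕ) by omega)] at hv
        split_ifs <;> omega
      · have hv := congrArg Fin.val (htail i h2a)
        split_ifs <;> omega

theorem card_avoid_132_321 (n : ℕ) (hn : 1 ≤ n) :
    Nat.card {π : Equiv.Perm (Fin n) // Avoids132 π ∧ Avoids321 π} = 1 + n * (n - 1) / 2 := by
  classical
  have h0 : 0 < n := hn
  rw [Nat.card_eq_fintype_card, Fintype.card_subtype]
  set Q : Finset (ℕ × ℕ) :=
    (Finset.range (n+1) ×ˢ Finset.range (n+1)).filter
      (fun p => 1 ≤ p.1 ∧ p.1 < p.2 ∧ p.2 ≤ n) with hQ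
  set P : Finset (ℕ × ℕ) := insert (0, n) Q with hP
  have hmemP : ∀ p : ℕ × ℕ, p ∈ P ↔ (p.1 < p.2 ∧ p.2 ≤ n ∧ (p.1 = 0 → p.2 = n)) := by
    intro p
    simp only [hP, hQ, Finset.mem_insert, Finset.mem_filter, Finset.mem_product, Finset.mem_range]
    constructor
    · rintro (rfl | h)
      · exact ⟨h0, le_rfl, fun _ => rfl⟩
      · exact ⟨h.2.2.1, h.2.2.2, fun hx => by omega⟩
    · rintro ⟨hlt, hle, hc⟩
      rcases Nat.eq_zero_or_pos p.1 with h1 | h1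
      · left
        have h2 := hc h1
        cases p
        simp_all
      · right
        exact ⟨⟨by omega, by omega⟩, h1, hlt, hle⟩
  have hcard : P.card =
      (Finset.univ.filter fun π : Equiv.Perm (Fin n) => Avoids132 π ∧ Avoids321 π).card := by
    apply Finset.card_bij (fun p _ => rotp n p.1 p.2)
    · intro a ha
      have ha' := (hmemP a).mp ha
      simp only [Finset.mem_filter, Finset.mem_univ, true_and]
      exact rotp_avoids ha'.1 ha'.2.1
    · intro a ha b hb hab
      have ha' := (hmemP a).mp ha
      have hb' := (hmemP b).mp hb
      obtain ⟨e1, e2⟩ := rotp_inj_param ha'.1 ha'.2.1 ha'.2.2 hb'.1 hb'.2.1 hb'.2.2 hab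
      exact Prod.ext e1 e2
    · intro π hπ
      simp only [Finset.mem_filter, Finset.mem_univ, true_and] at hπ
      obtain ⟨s, t, hst, htn, hcan, hpi⟩ := structure_thm h0 π hπ.1 hπ.2
      exact ⟨(s, t), (hmemP _).mpr ⟨hst, htn, hcan⟩, hpi.symm⟩
  rw [← hcard]
  have hQ0 : (0, n) ∉ Q := by simp [hQ]
  rw [hP, Finset.card_insert_of_notMem hQ0]
  have hQB : Q = (Finset.range (n+1)).biUnion
      (fun t => (Finset.Ico 1 t).image (fun s => (s, t))) := by
    ext p
    simp only [hQ, Finset.mem_filter, Finset.mem_product, Finset.mem_range,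
      Finset.mem_biUnion, Finset.mem_image, Finset.mem_Ico]
    constructor
    · rintro ⟨⟨hp1, hp2⟩, h1, h2, h3⟩
      exact ⟨p.2, hp2, p.1, ⟨h1, h2⟩, rfl⟩
    · rintro ⟨t, ht, s, ⟨hs1, hs2⟩, rfl⟩
      refine ⟨⟨by omega, by omega⟩, by omega, by omega, by omega⟩
  have hdisj : ∀ x ∈ Finset.range (n+1), ∀ y ∈ Finset.range (n+1), x ≠ y →
      Disjoint ((Finset.Ico 1 x).image (fun s => (s, x)))
        ((Finset.Ico 1 y).image (fun s => (s, y))) := by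
    intro x _ y _ hxy
    simp only [Finset.disjoint_left, Finset.mem_image, Finset.mem_Ico]
    rintro a ⟨s1, hs1, rfl⟩ ⟨s2, hs2, he⟩
    exact hxy (congrArg Prod.snd he).symm
  rw [hQB, Finset.card_biUnion hdisj]
  have hc2 : ∀ t ∈ Finset.range (n+1),
      ((Finset.Ico 1 t).image (fun s => (s, t))).card = t - 1 := by
    intro t _
    rw [Finset.card_image_of_injective _ (fun a b hab => congrArg Prod.fst hab)]
    exact Nat.card_Ico 1 t
  rw [Finset.sum_congr rfl hc2, Finset.sum_range_succ']
  have hg := Finset.sum_range_id_mul_two n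
  simp only [Nat.add_sub_cancel, Nat.zero_sub, add_zero]
  omega
end

section
/- For every n ≥ 0, the quadruples of statistics (asc, des, MNA, MND) and (des, asc, MND, MNA) are equidistributed on S_n(231,312); i.e., there is a bijection on S_n(231,312) that simultaneously exchanges asc with des and MNA with MND. -/
/-! ### Auxiliary material -/

section Aux

variable {n : ℕ}

lemma pv_eq {π : Equiv.Perm (Fin n)} {i : ℕ} (h : i < n) : pv π i = (π ⟨i, h⟩ : ℕ) :=
  dif_pos h

lemma mem_ascents_iff {π : Equiv.Perm (Fin n)} {i : ℕ} :
    i ∈ ascents π ↔ i < n - 1 ∧ pv π i < pv π (i + 1) := by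
  simp [ascents]

lemma descents_eq (π : Equiv.Perm (Fin n)) :
    descents π = Finset.range (n - 1) \ ascents π := by
  ext i
  simp only [descents, ascents, Finset.mem_filter, Finset.mem_sdiff, Finset.mem_range]
  constructor
  · rintro ⟨hi, h⟩
    exact ⟨hi, fun hc => absurd hc.2 (lt_asymm h)⟩
  · rintro ⟨hi, h⟩
    refine ⟨hi, ?_⟩
    have h1 : i < n := by omega
    have h2 : i + 1 < n := by omega
    have hne : pv π (i + 1) ≠ pv π i := by
      rw [pv_eq h1, pv_eq h2]
      intro he
      have h3 : (⟨i + 1, h2⟩ : Fin n) = ⟨i, h1⟩ := π.injective (Fin.val_injective he)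
      simpa using h3
    have hnot : ¬ pv π i < pv π (i + 1) := fun hc => h ⟨hi, hc⟩
    omega

/-! ### Block structure from a prescribed ascent set -/

/-- Start of the block of position `i`, given ascent set `S`. -/
def blkB (S : Finset ℕ) (i : ℕ) : ℕ := Nat.findGreatest (fun j => j - 1 ∈ S) i

/-- End of the block of position `i`, given ascent set `S`. -/
noncomputable def blkE (n : ℕ) (S : Finset ℕ) (i : ℕ) : ℕ :=
  sInf {s | i ≤ s ∧ (s ∈ S ∨ s = n - 1)}

lemma blkB_le (S : Finset ℕ) (i : ℕ) : blkB S i ≤ i := Nat.findGreatest_le i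

lemma blkB_mem {S : Finset ℕ} {i : ℕ} (h : blkB S i ≠ 0) : blkB S i - 1 ∈ S :=
  (Nat.findGreatest_eq_iff.1 (rfl : blkB S i = blkB S i)).2.1 h

lemma le_blkB {S : Finset ℕ} {j i : ℕ} (hj : j ≤ i) (hP : j - 1 ∈ S) : j ≤ blkB S i :=
  Nat.le_findGreatest hj hP

lemma blkB_mono (S : Finset ℕ) {i j : ℕ} (h : i ≤ j) : blkB S i ≤ blkB S j :=
  Nat.findGreatest_mono_right _ h

lemma blkE_mem {S : Finset ℕ} {i : ℕ} (h : i ≤ n - 1) :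
    i ≤ blkE n S i ∧ (blkE n S i ∈ S ∨ blkE n S i = n - 1) :=
  Nat.sInf_mem (s := {s | i ≤ s ∧ (s ∈ S ∨ s = n - 1)}) ⟨n - 1, ⟨h, Or.inr rfl⟩⟩

lemma blkE_min {S : Finset ℕ} {i m : ℕ} (h1 : i ≤ m) (h2 : m ∈ S ∨ m = n - 1) :
    blkE n S i ≤ m := Nat.sInf_le (show m ∈ {s | i ≤ s ∧ (s ∈ S ∨ s = n - 1)} from ⟨h1, h2⟩)

lemma blkE_le {S : Finset ℕ} {i : ℕ} (h : i ≤ n - 1) : blkE n S i ≤ n - 1 :=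
  blkE_min h (Or.inr rfl)

lemma le_blkE {S : Finset ℕ} {i : ℕ} (h : i ≤ n - 1) : i ≤ blkE n S i := (blkE_mem h).1

lemma blk_interior {S : Finset ℕ} {i p : ℕ} (h1 : blkB S i ≤ p) (h2 : p < blkE n S i) :
    p ∉ S := by
  intro hp
  rcases le_or_gt i p with h | h
  · exact absurd (blkE_min (n := n) h (Or.inl hp)) (by omega)
  · have := le_blkB (S := S) (j := p + 1) (i := i) (by omega) (by simpa using hp)
    omega

lemma blk_const {S : Finset ℕ} {i j : ℕ} (hi : i ≤ n - 1)
    (h1 : blkB S i ≤ j) (h2 : j ≤ blkE n S i) :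
    blkB S j = blkB S i ∧ blkE n S j = blkE n S i := by
  have hj : j ≤ n - 1 := le_trans h2 (blkE_le hi)
  constructor
  · refine le_antisymm ?_ ?_
    · by_contra hlt
      push_neg at hlt
      have hle := blkB_le S j
      have hmem := blkB_mem (S := S) (i := j) (by omega)
      exact blk_interior (n := n) (i := i) (by omega) (by omega) hmem
    · rcases Nat.eq_zero_or_pos (blkB S i) with h0 | h0
      · omega
      · exact le_blkB h1 (blkB_mem (by omega))
  · refine le_antisymm ?_ ?_
    · exact blkE_min h2 (blkE_mem hi).2
    · by_contra hlt
      push_neg at hlt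
      have hm := blkE_mem (n := n) (S := S) hj
      have hle := blkE_le (n := n) (S := S) hi
      have hmem : blkE n S j ∈ S := hm.2.resolve_right (by omega)
      exact blk_interior (n := n) (i := i) (le_trans h1 hm.1) (by omega) hmem

lemma blkE_mono {S : Finset ℕ} {i j : ℕ} (hij : i ≤ j) (hj : j ≤ n - 1) :
    blkE n S i ≤ blkE n S j := by
  have h := blkE_mem (n := n) (S := S) hj
  exact blkE_min (le_trans hij h.1) h.2

/-! ### The layered permutation -/

/-- The value at position `i` of the layered permutation with ascent set `S`. -/
noncomputable def lfun (n : ℕ) (S : Finset ℕ) (i : ℕ) : ℕ := blkB S i + blkE n S i - i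

lemma lfun_bounds {S : Finset ℕ} {i : ℕ} (h : i ≤ n - 1) :
    blkB S i ≤ lfun n S i ∧ lfun n S i ≤ blkE n S i := by
  have h1 := blkB_le S i
  have h2 := le_blkE (n := n) (S := S) h
  unfold lfun
  omega

lemma lfun_invol {S : Finset ℕ} {i : ℕ} (h : i ≤ n - 1) :
    lfun n S (lfun n S i) = i := by
  have hb := lfun_bounds (S := S) h
  have hc := blk_const (S := S) h hb.1 hb.2
  have h1 := blkB_le S i
  have h2 := le_blkE (n := n) (S := S) h
  rw [show lfun n S (lfun n S i)
      = blkB S (lfun n S i) + blkE n S (lfun n S i) - lfun n S i from rfl, hc.1, hc.2]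
  unfold lfun at hb ⊢
  omega

/-- The layered permutation with ascent set `S` (restricted to `[0, n-2]`). -/
noncomputable def layered (n : ℕ) (S : Finset ℕ) : Equiv.Perm (Fin n) :=
  Function.Involutive.toPerm
    (fun i => ⟨lfun n (S.filter (· < n - 1)) i.1, by
      have hin := i.isLt
      have h1 := (lfun_bounds (n := n) (S := S.filter (· < n - 1)) (i := i.1) (by omega)).2
      have h2 := blkE_le (n := n) (S := S.filter (· < n - 1)) (i := i.1) (by omega)
      omega⟩)
    (fun i => by
      have hin := i.isLt
      apply Fin.ext
      exact lfun_invol (by omega))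

lemma layered_apply (S : Finset ℕ) (i : Fin n) :
    (layered n S i : ℕ) = lfun n (S.filter (· < n - 1)) i := rfl

lemma lfun_ascent_iff {S : Finset ℕ} {i : ℕ} (hi : i < n - 1) :
    lfun n S i < lfun n S (i + 1) ↔ i ∈ S := by
  constructor
  · intro h
    by_contra hiS
    have hB : blkB S (i + 1) = blkB S i := by
      unfold blkB
      exact Nat.findGreatest_of_not (by simpa using hiS)
    have hE : blkE n S (i + 1) = blkE n S i := by
      unfold blkE
      congr 1
      ext s
      simp only [Set.mem_setOf_eq]
      constructor
      · rintro ⟨hs1, hs2⟩; exact ⟨by omega, hs2⟩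
      · rintro ⟨hs1, hs2⟩
        refine ⟨?_, hs2⟩
        rcases hs2 with hs2 | hs2
        · have : s ≠ i := fun e => hiS (e ▸ hs2)
          omega
        · omega
    have h1 := blkB_le S i
    have h2 : i ≤ blkE n S i := le_blkE (by omega)
    have hE2 : blkE n S i ≠ i := by
      intro he
      rcases (blkE_mem (n := n) (S := S) (i := i) (by omega)).2 with hh | hh
      · exact hiS (he ▸ hh)
      · omega
    rw [show lfun n S i = blkB S i + blkE n S i - i from rfl,
      show lfun n S (i + 1) = blkB S (i + 1) + blkE n S (i + 1) - (i + 1) from rfl,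
      hB, hE] at h
    omega
  · intro hiS
    have hEi : blkE n S i = i :=
      le_antisymm (blkE_min le_rfl (Or.inl hiS)) (le_blkE (by omega))
    have hBsucc : blkB S (i + 1) = i + 1 :=
      le_antisymm (blkB_le _ _) (le_blkB le_rfl (by simpa using hiS))
    have h1 := blkB_le S i
    have h2 : i + 1 ≤ blkE n S (i + 1) := le_blkE (by omega)
    rw [show lfun n S i = blkB S i + blkE n S i - i from rfl,
      show lfun n S (i + 1) = blkB S (i + 1) + blkE n S (i + 1) - (i + 1) from rfl,
      hEi, hBsucc]
    omega

lemma ascents_layered {S : Finset ℕ} (hS : ∀ s ∈ S, s < n - 1) :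
    ascents (layered n S) = S := by
  have hf : S.filter (· < n - 1) = S := Finset.filter_true_of_mem (fun s hs => hS s hs)
  ext i
  rw [mem_ascents_iff]
  constructor
  · rintro ⟨hi, h⟩
    rw [pv_eq (show i < n by omega), pv_eq (show i + 1 < n by omega),
      layered_apply, layered_apply] at h
    rw [← hf]
    exact (lfun_ascent_iff hi).1 h
  · intro hiS
    have hi : i < n - 1 := hS i hiS
    refine ⟨hi, ?_⟩
    rw [pv_eq (show i < n by omega), pv_eq (show i + 1 < n by omega),
      layered_apply, layered_apply]
    exact (lfun_ascent_iff hi).2 (by rw [hf]; exact hiS)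

lemma lfun_sep {S : Finset ℕ} {i j : ℕ} (hij : i < j) (hj : j ≤ n - 1)
    (h : lfun n S i < lfun n S j) : blkE n S i < blkB S j := by
  have hi : i ≤ n - 1 := by omega
  have hbi := blkB_le S i
  have hei := le_blkE (n := n) (S := S) hi
  have hje : blkE n S i < j := by
    by_contra hle
    push_neg at hle
    have hc := blk_const (S := S) hi (by omega : blkB S i ≤ j) hle
    unfold lfun at h
    rw [hc.1, hc.2] at h
    omega
  have hmem := (blkE_mem (n := n) (S := S) hi).2
  have heS : blkE n S i ∈ S := hmem.resolve_right (by omega)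
  have := le_blkB (S := S) (j := blkE n S i + 1) (i := j) (by omega) (by simpa using heS)
  omega

lemma layered_avoids231 (n : ℕ) (S : Finset ℕ) : Avoids231 (layered n S) := by
  intro hc
  obtain ⟨i, j, k, hij, hjk, h1, h2⟩ := hc
  rw [Fin.lt_def] at hij hjk h1 h2
  rw [layered_apply, layered_apply] at h1 h2
  set S' := S.filter (· < n - 1) with hS'
  have hkn := k.isLt
  have hsep := lfun_sep (S := S') hij (by omega) h2
  have hbk := blkB_mono S' (le_of_lt hjk)
  have h_i := (lfun_bounds (n := n) (S := S') (i := (i : ℕ)) (by omega)).2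
  have h_k := (lfun_bounds (n := n) (S := S') (i := (k : ℕ)) (by omega)).1
  omega

lemma layered_avoids312 (n : ℕ) (S : Finset ℕ) : Avoids312 (layered n S) := by
  intro hc
  obtain ⟨i, j, k, hij, hjk, h1, h2⟩ := hc
  rw [Fin.lt_def] at hij hjk h1 h2
  rw [layered_apply, layered_apply] at h1 h2
  set S' := S.filter (· < n - 1) with hS'
  have hkn := k.isLt
  have hsep := lfun_sep (S := S') hjk (by omega) h1
  have h_ei := blkE_mono (n := n) (S := S') (le_of_lt hij) (by omega)
  have h_i := (lfun_bounds (n := n) (S := S') (i := (i : ℕ)) (by omega)).2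
  have h_k := (lfun_bounds (n := n) (S := S') (i := (k : ℕ)) (by omega)).1
  omega

/-! ### Uniqueness: an avoider is determined by its ascent set -/

variable {π : Equiv.Perm (Fin n)}

lemma not_ascent_descent {i : ℕ} (h : i + 1 < n) (hna : i ∉ ascents π) :
    (π ⟨i + 1, h⟩ : ℕ) < π ⟨i, by omega⟩ := by
  have hne : (π ⟨i + 1, h⟩ : ℕ) ≠ (π ⟨i, by omega⟩ : ℕ) := by
    intro he
    have h3 := π.injective (Fin.val_injective he)
    simpa using h3
  have hnlt : ¬ ((π ⟨i, by omega⟩ : ℕ) < π ⟨i + 1, h⟩) := by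
    intro hlt
    apply hna
    rw [mem_ascents_iff]
    exact ⟨by omega, by rw [pv_eq (show i < n by omega), pv_eq h]; exact hlt⟩
  omega

lemma descent_step (h231 : Avoids231 π) (h312 : Avoids312 π) {i : ℕ} (h : i + 1 < n)
    (hd : (π ⟨i + 1, h⟩ : ℕ) < π ⟨i, by omega⟩) :
    (π ⟨i + 1, h⟩ : ℕ) + 1 = π ⟨i, by omega⟩ := by
  by_contra hne
  set a := (π ⟨i + 1, h⟩ : ℕ) with ha
  have hv : a + 1 < n := by
    have := (π ⟨i, by omega⟩).isLt
    omega
  set k := π.symm ⟨a + 1, hv⟩ with hk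
  have hπk : (π k : ℕ) = a + 1 := by rw [hk, π.apply_symm_apply]
  have hki : (k : ℕ) ≠ i := by
    intro he
    have : k = ⟨i, by omega⟩ := Fin.ext he
    rw [this] at hπk
    omega
  have hki1 : (k : ℕ) ≠ i + 1 := by
    intro he
    have : k = ⟨i + 1, h⟩ := Fin.ext he
    rw [this] at hπk
    omega
  rcases lt_or_gt_of_ne hki with hlt | hgt
  · exact h231 ⟨k, ⟨i, by omega⟩, ⟨i + 1, h⟩, by rw [Fin.lt_def]; exact hlt,
      by rw [Fin.lt_def]; exact Nat.lt_succ_self i,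
      by rw [Fin.lt_def]; omega, by rw [Fin.lt_def]; omega⟩
  · have hgt' : i + 1 < (k : ℕ) := by omega
    exact h312 ⟨⟨i, by omega⟩, ⟨i + 1, h⟩, k, by rw [Fin.lt_def]; exact Nat.lt_succ_self i,
      by rw [Fin.lt_def]; exact hgt',
      by rw [Fin.lt_def]; omega, by rw [Fin.lt_def]; omega⟩

lemma ascent_split (h231 : Avoids231 π) (h312 : Avoids312 π) {i : ℕ} (hi : i ∈ ascents π)
    {j k : Fin n} (hj : (j : ℕ) ≤ i) (hk : i < (k : ℕ)) : (π j : ℕ) < π k := by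
  obtain ⟨hi1, hasc⟩ := mem_ascents_iff.1 hi
  have hin : i + 1 < n := by omega
  rw [pv_eq (show i < n by omega), pv_eq hin] at hasc
  by_contra hc
  push_neg at hc
  have hjk : j ≠ k := by
    intro he
    rw [he] at hj
    omega
  have hne : (π k : ℕ) ≠ (π j : ℕ) := by
    intro he
    exact hjk (π.injective (Fin.val_injective he.symm))
  have hlt : (π k : ℕ) < π j := by omega
  rcases eq_or_lt_of_le hj with hji | hji
  · have hjF : j = ⟨i, by omega⟩ := Fin.ext hji
    rcases eq_or_lt_of_le (show i + 1 ≤ (k : ℕ) by omega) with hki | hki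
    · have hkF : k = ⟨i + 1, hin⟩ := Fin.ext hki.symm
      rw [hjF, hkF] at hlt
      exact lt_asymm hasc hlt
    · exact h231 ⟨⟨i, by omega⟩, ⟨i + 1, hin⟩, k,
        by rw [Fin.lt_def]; exact Nat.lt_succ_self i, by rw [Fin.lt_def]; exact hki,
        by rw [Fin.lt_def]; rw [hjF] at hlt; exact hlt, by rw [Fin.lt_def]; exact hasc⟩
  · rcases lt_trichotomy ((π j : ℕ)) ((π ⟨i + 1, hin⟩ : ℕ)) with hh | hh | hh
    · have hki1 : k ≠ ⟨i + 1, hin⟩ := by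
        intro he
        rw [he] at hlt
        omega
      have hki : i + 1 < (k : ℕ) := by
        have : (k : ℕ) ≠ i + 1 := fun he => hki1 (Fin.ext he)
        omega
      exact h231 ⟨j, ⟨i + 1, hin⟩, k,
        by rw [Fin.lt_def]; exact show (j : ℕ) < i + 1 by omega,
        by rw [Fin.lt_def]; exact hki,
        by rw [Fin.lt_def]; exact hlt, by rw [Fin.lt_def]; exact hh⟩
    · have hje : j = ⟨i + 1, hin⟩ := π.injective (Fin.val_injective hh)
      have hj2 : (j : ℕ) = i + 1 := by rw [hje]
      omega
    · exact h312 ⟨j, ⟨i, by omega⟩, ⟨i + 1, hin⟩, by rw [Fin.lt_def]; exact hji,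
        by rw [Fin.lt_def]; exact Nat.lt_succ_self i,
        by rw [Fin.lt_def]; exact hasc, by rw [Fin.lt_def]; exact hh⟩

lemma ascent_prefix_le (h231 : Avoids231 π) (h312 : Avoids312 π) {i : ℕ} (hi : i ∈ ascents π)
    {j : Fin n} (hj : (j : ℕ) ≤ i) : (π j : ℕ) ≤ i := by
  by_contra hc
  push_neg at hc
  obtain ⟨hi1, _⟩ := mem_ascents_iff.1 hi
  set iF : Fin n := ⟨i, by omega⟩ with hiF
  have hjT : j ∉ Finset.Ioi iF := by
    simp only [Finset.mem_Ioi, Fin.lt_def, hiF]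
    omega
  have hcardT : (insert j (Finset.Ioi iF)).card = n - i := by
    rw [Finset.card_insert_of_notMem hjT, Fin.card_Ioi]
    simp only [hiF]
    omega
  have hmapsto : ∀ t ∈ insert j (Finset.Ioi iF), π t ∈ Finset.Ici (π j) := by
    intro t ht
    rcases Finset.mem_insert.1 ht with rfl | ht
    · exact Finset.mem_Ici.2 le_rfl
    · refine Finset.mem_Ici.2 (le_of_lt ?_)
      rw [Fin.lt_def]
      have hit := Finset.mem_Ioi.1 ht
      rw [Fin.lt_def] at hit
      exact ascent_split h231 h312 hi hj hit
  have hcard := Finset.card_le_card_of_injOn π hmapsto (fun a _ b _ hab => π.injective hab)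
  rw [hcardT, Fin.card_Ici] at hcard
  omega

lemma ascent_suffix_ge (h231 : Avoids231 π) (h312 : Avoids312 π) {i : ℕ} (hi : i ∈ ascents π)
    {k : Fin n} (hk : i < (k : ℕ)) : i < (π k : ℕ) := by
  obtain ⟨hi1, _⟩ := mem_ascents_iff.1 hi
  set iF : Fin n := ⟨i, by omega⟩ with hiF
  have himg : (Finset.Iic iF).image π = Finset.Iic iF := by
    apply Finset.eq_of_subset_of_card_le
    · intro v hv
      obtain ⟨x, hx, hxv⟩ := Finset.mem_image.1 hv
      rw [Finset.mem_Iic] at hx ⊢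
      rw [← hxv]
      rw [Fin.le_def] at hx ⊢
      exact ascent_prefix_le h231 h312 hi hx
    · rw [Finset.card_image_of_injective _ π.injective]
  by_contra hc
  push_neg at hc
  have hkV : π k ∈ Finset.Iic iF := by
    rw [Finset.mem_Iic, Fin.le_def]
    exact hc
  rw [← himg] at hkV
  obtain ⟨x, hx, hxk⟩ := Finset.mem_image.1 hkV
  have hxe : x = k := π.injective hxk
  rw [hxe] at hx
  rw [Finset.mem_Iic, Fin.le_def] at hx
  exact absurd (lt_of_lt_of_le hk hx) (lt_irrefl i)

lemma run_lemma (h231 : Avoids231 π) (h312 : Avoids312 π) {j : ℕ} :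
    ∀ d, ∀ (h : j + d < n), (∀ p, j ≤ p → p < j + d → p ∉ ascents π) →
      (π ⟨j + d, h⟩ : ℕ) + d = π ⟨j, by omega⟩ := by
  intro d
  induction d with
  | zero => intro h _; rfl
  | succ d ih =>
    intro h hno
    have h' : j + d < n := by omega
    have hd : (π ⟨j + d + 1, by omega⟩ : ℕ) < π ⟨j + d, h'⟩ :=
      not_ascent_descent (by omega) (hno (j + d) (by omega) (by omega))
    have hstep := descent_step h231 h312 (i := j + d) (by omega) hd
    have hih := ih h' (fun p hp1 hp2 => hno p hp1 (by omega))
    have hgl : (π ⟨j + (d + 1), h⟩ : ℕ) = π ⟨j + d + 1, by omega⟩ := rfl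
    omega

lemma layered_ascents (h231 : Avoids231 π) (h312 : Avoids312 π) :
    layered n (ascents π) = π := by
  apply Equiv.ext
  intro x
  apply Fin.ext
  have hS : ∀ s ∈ ascents π, s < n - 1 := fun s hs => (mem_ascents_iff.1 hs).1
  have hf : (ascents π).filter (· < n - 1) = ascents π :=
    Finset.filter_true_of_mem (fun s hs => hS s hs)
  rw [layered_apply, hf]
  have hxn := x.isLt
  have hin : (x : ℕ) ≤ n - 1 := by omega
  obtain ⟨b, hbdef⟩ : ∃ b, blkB (ascents π) x = b := ⟨_, rfl⟩
  obtain ⟨e, hedef⟩ : ∃ e, blkE n (ascents π) x = e := ⟨_, rfl⟩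
  have hb_le : b ≤ (x : ℕ) := hbdef ▸ blkB_le _ _
  have he_ge : (x : ℕ) ≤ e := hedef ▸ le_blkE (n := n) hin
  have he_le : e ≤ n - 1 := hedef ▸ blkE_le (n := n) hin
  have hbn : b < n := by omega
  have hen : e < n := by omega
  have hno : ∀ p, b ≤ p → p < e → p ∉ ascents π := by
    intro p h1 h2
    exact blk_interior (n := n) (hbdef ▸ h1) (hedef ▸ h2)
  have hrun : ∀ d, b + d ≤ e → ∀ (hd : b + d < n),
      (π ⟨b + d, hd⟩ : ℕ) + d = π ⟨b, hbn⟩ := by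
    intro d hde hd
    exact run_lemma h231 h312 d hd (fun p hp1 hp2 => hno p hp1 (by omega))
  have hrun1 : (π ⟨e, hen⟩ : ℕ) + (e - b) = π ⟨b, hbn⟩ := by
    have h := hrun (e - b) (by omega) (by omega)
    have hEq : (⟨b + (e - b), by omega⟩ : Fin n) = (⟨e, hen⟩ : Fin n) :=
      Fin.ext (show b + (e - b) = e by omega)
    rwa [hEq] at h
  have hrun2 : (π x : ℕ) + ((x : ℕ) - b) = π ⟨b, hbn⟩ := by
    have h := hrun ((x : ℕ) - b) (by omega) (by omega)
    have hEq : (⟨b + ((x : ℕ) - b), by omega⟩ : Fin n) = x :=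
      Fin.ext (show b + ((x : ℕ) - b) = (x : ℕ) by omega)
    rwa [hEq] at h
  have hπb_ge : ∀ (m : Fin n), b ≤ (m : ℕ) → b ≤ (π m : ℕ) := by
    intro m hm
    rcases Nat.eq_zero_or_pos b with h0 | h0
    · omega
    · have hbA : b - 1 ∈ ascents π := by
        rw [← hbdef]
        exact blkB_mem (by rw [hbdef]; omega)
      have h2 := ascent_suffix_ge h231 h312 hbA (k := m) (by omega)
      omega
  have h2 : b ≤ (π ⟨e, hen⟩ : ℕ) := hπb_ge ⟨e, hen⟩ (show b ≤ e by omega)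
  have hπb : (π ⟨b, hbn⟩ : ℕ) = e := by
    have hsp := (blkE_mem (n := n) (S := ascents π) (i := (x : ℕ)) hin).2
    rw [hedef] at hsp
    rcases hsp with heA | heE
    · have h1 : (π ⟨b, hbn⟩ : ℕ) ≤ e :=
        ascent_prefix_le h231 h312 heA (j := ⟨b, hbn⟩) (show b ≤ e by omega)
      omega
    · have h3 := (π ⟨b, hbn⟩).isLt
      omega
  have hfin : lfun n (ascents π) (x : ℕ) = b + e - (x : ℕ) := by
    unfold lfun
    rw [hbdef, hedef]
  rw [hfin]
  omega

end Aux

theorem equidistribution_231_312 (n : ℕ) :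
    ∃ e : {π : Equiv.Perm (Fin n) // Avoids231 π ∧ Avoids312 π} ≃
          {π : Equiv.Perm (Fin n) // Avoids231 π ∧ Avoids312 π},
      ∀ π, asc (e π).1 = des π.1 ∧ des (e π).1 = asc π.1 ∧
        MNA (e π).1 = MND π.1 ∧ MND (e π).1 = MNA π.1 := by
  classical
  let f : {π : Equiv.Perm (Fin n) // Avoids231 π ∧ Avoids312 π} →
      {π : Equiv.Perm (Fin n) // Avoids231 π ∧ Avoids312 π} :=
    fun p => ⟨layered n (descents p.1), layered_avoids231 n _, layered_avoids312 n _⟩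
  have hsub : ∀ π : Equiv.Perm (Fin n), ∀ s ∈ descents π, s < n - 1 := by
    intro π s hs
    simp only [descents, Finset.mem_filter, Finset.mem_range] at hs
    exact hs.1
  have hasc : ∀ p, ascents (f p).1 = descents p.1 := fun p => ascents_layered (hsub p.1)
  have hdes : ∀ p, descents (f p).1 = ascents p.1 := by
    intro p
    rw [descents_eq, hasc p, descents_eq]
    exact sdiff_sdiff_eq_self (Finset.filter_subset _ _)
  have hinvol : Function.Involutive f := by
    intro p
    apply Subtype.ext
    show layered n (descents (f p).1) = p.1
    rw [hdes p]
    exact layered_ascents p.2.1 p.2.2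
  refine ⟨hinvol.toPerm, fun p => ?_⟩
  have e1 : ascents ((hinvol.toPerm) p).1 = descents p.1 := hasc p
  have e2 : descents ((hinvol.toPerm) p).1 = ascents p.1 := hdes p
  refine ⟨?_, ?_, ?_, ?_⟩
  · simp only [asc, des]; rw [e1]
  · simp only [asc, des]; rw [e2]
  · simp only [MNA, MND]; rw [e1]
  · simp only [MNA, MND]; rw [e2]
end

section
/- For every n ≥ 0, the quadruple of statistics (asc, des, MNA, MND) is equidistributed on S_n(231,312) and S_n(213,231); i.e., there is a bijection from S_n(231,312) to S_n(213,231) preserving all four statistics. -/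
section Basic
variable {n : ℕ} (π : Equiv.Perm (Fin n))

lemma pv_lt {i : ℕ} (h : i < n) : pv π i < n := by
  simp [pv, h]

lemma pv_inj {i j : ℕ} (hi : i < n) (hj : j < n) (h : pv π i = pv π j) : i = j := by
  simp only [pv, hi, hj, dif_pos] at h
  have := congrArg Fin.val (π.injective (Fin.ext h))
  simpa using this

lemma pv_image : (Finset.range n).image (pv π) = Finset.range n := by
  apply Finset.eq_of_subset_of_card_le
  · intro v hv
    simp only [Finset.mem_image, Finset.mem_range] at hv ⊢
    obtain ⟨i, hi, rfl⟩ := hv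
    exact pv_lt π hi
  · rw [Finset.card_image_of_injOn, Finset.card_range]
    intro a ha b hb hab
    exact pv_inj π (Finset.mem_range.mp ha) (Finset.mem_range.mp hb) hab

lemma mem_descents {i : ℕ} : i ∈ descents π ↔ i < n - 1 ∧ pv π (i+1) < pv π i := by
  simp [descents]

lemma mem_ascents {i : ℕ} : i ∈ ascents π ↔ i < n - 1 ∧ pv π i < pv π (i+1) := by
  simp [ascents]

lemma descents_subset : descents π ⊆ Finset.range (n-1) := Finset.filter_subset _ _

lemma ascents_eq_compl : ascents π = (Finset.range (n-1)) \ descents π := by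
  ext i
  simp only [mem_ascents, Finset.mem_sdiff, Finset.mem_range, mem_descents, not_and, not_lt]
  constructor
  · rintro ⟨h1, h2⟩; exact ⟨h1, fun _ => le_of_lt h2⟩
  · rintro ⟨h1, h2⟩
    refine ⟨h1, lt_of_le_of_ne (h2 h1) fun he => ?_⟩
    have := pv_inj π (by omega : i < n) (by omega : i+1 < n) he
    omega

/-- Pigeonhole: if the prefix [0,a] maps into [0,a], every later position maps above a. -/
lemma suffix_gt {a : ℕ} (h : ∀ j ≤ a, pv π j ≤ a) {k : ℕ} (hak : a < k) (hk : k < n) :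
    a < pv π k := by
  by_contra hc
  push_neg at hc
  have hP : (Finset.range (a+1)).image (pv π) = Finset.range (a+1) := by
    apply Finset.eq_of_subset_of_card_le
    · intro v hv
      simp only [Finset.mem_image, Finset.mem_range] at hv ⊢
      obtain ⟨j, hj, rfl⟩ := hv
      exact Nat.lt_succ_of_le (h j (Nat.lt_succ_iff.mp hj))
    · rw [Finset.card_image_of_injOn, Finset.card_range]
      intro x hx y hy hxy
      exact pv_inj π (by simp at hx; omega) (by simp at hy; omega) hxy
  have : pv π k ∈ (Finset.range (a+1)).image (pv π) := by
    rw [hP]; simp; omega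
  simp only [Finset.mem_image, Finset.mem_range] at this
  obtain ⟨j, hj, hjk⟩ := this
  have := pv_inj π (by omega) hk hjk
  omega

/-- Pigeonhole: if every later position maps above a, the prefix maps into [0,a]. -/
lemma prefix_le {a : ℕ} (han : a < n) (h : ∀ k, a < k → k < n → a < pv π k)
    {j : ℕ} (hj : j ≤ a) : pv π j ≤ a := by
  by_contra hc
  push_neg at hc
  have hP : (Finset.Ico (a+1) n).image (pv π) = Finset.Ico (a+1) n := by
    apply Finset.eq_of_subset_of_card_le
    · intro v hv
      simp only [Finset.mem_image, Finset.mem_Ico] at hv ⊢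
      obtain ⟨k, hk, rfl⟩ := hv
      exact ⟨h k (by omega) hk.2, pv_lt π hk.2⟩
    · rw [Finset.card_image_of_injOn]
      intro x hx y hy hxy
      exact pv_inj π (by simp at hx; omega) (by simp at hy; omega) hxy
  have : pv π j ∈ (Finset.Ico (a+1) n).image (pv π) := by
    rw [hP]
    simp only [Finset.mem_Ico]
    exact ⟨hc, pv_lt π (by omega)⟩
  simp only [Finset.mem_image, Finset.mem_Ico] at this
  obtain ⟨k, hk, hjk⟩ := this
  have := pv_inj π hk.2 (by omega) hjk
  omega

/-- A chain of consecutive descents decreases values accordingly. -/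
lemma desc_chain : ∀ (d j : ℕ), j + d < n →
    (∀ m, j ≤ m → m < j + d → m ∈ descents π) → pv π (j+d) + d ≤ pv π j := by
  intro d
  induction d with
  | zero => intro j _ _; simp
  | succ d ih =>
    intro j hjd hm
    have h1 : j + d ∈ descents π := hm (j+d) (by omega) (by omega)
    have h2 := (mem_descents π).mp h1
    have h3 := ih j (by omega) (fun m h h' => hm m h (by omega))
    have : j + d + 1 = j + (d+1) := by omega
    rw [this] at h2
    omega

lemma exists_ascent : ∀ (d x : ℕ), x + d < n → pv π x < pv π (x + d) →
    ∃ a, x ≤ a ∧ a < x + d ∧ a ∈ ascents π := by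
  intro d
  induction d with
  | zero => intro x _ h; simp at h
  | succ d ih =>
    intro x hxd h
    by_cases hx : pv π x < pv π (x+1)
    · exact ⟨x, le_refl x, by omega, (mem_ascents π).mpr ⟨by omega, hx⟩⟩
    · rcases Nat.eq_or_lt_of_le (Nat.not_lt.mp hx) with he | hlt
      · have := pv_inj π (by omega) (by omega) he
        omega
      · obtain ⟨a, ha1, ha2, ha3⟩ := ih (x+1)
          (by omega) (by rw [show x+1+d = x+(d+1) from by omega]; omega)
        exact ⟨a, by omega, by omega, ha3⟩

lemma count_below {c : ℕ} (hc : c < n) :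
    ((Finset.range n).filter fun k => pv π k < c).card = c := by
  have himg : ((Finset.range n).filter fun k => pv π k < c).image (pv π)
      = Finset.range c := by
    ext v
    simp only [Finset.mem_image, Finset.mem_filter, Finset.mem_range]
    constructor
    · rintro ⟨k, ⟨_, hk⟩, rfl⟩; exact hk
    · intro hv
      have : v ∈ (Finset.range n).image (pv π) := by rw [pv_image]; simp; omega
      simp only [Finset.mem_image, Finset.mem_range] at this
      obtain ⟨k, hk, rfl⟩ := this
      exact ⟨k, ⟨hk, hv⟩, rfl⟩
  have := Finset.card_image_of_injOn (s := (Finset.range n).filter fun k => pv π k < c)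
    (f := pv π) (fun x hx y hy hxy =>
      pv_inj π (by simp at hx; exact hx.1) (by simp at hy; exact hy.1) hxy)
  rw [himg, Finset.card_range] at this
  omega

lemma count_above {c : ℕ} (hc : c < n) :
    ((Finset.range n).filter fun k => c < pv π k).card = n - 1 - c := by
  have himg : ((Finset.range n).filter fun k => c < pv π k).image (pv π)
      = Finset.Ico (c+1) n := by
    ext v
    simp only [Finset.mem_image, Finset.mem_filter, Finset.mem_range, Finset.mem_Ico]
    constructor
    · rintro ⟨k, ⟨hkn, hk⟩, rfl⟩; exact ⟨hk, pv_lt π hkn⟩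
    · intro hv
      have : v ∈ (Finset.range n).image (pv π) := by rw [pv_image]; simp; omega
      simp only [Finset.mem_image, Finset.mem_range] at this
      obtain ⟨k, hk, rfl⟩ := this
      exact ⟨k, ⟨hk, by omega⟩, rfl⟩
  have := Finset.card_image_of_injOn (s := (Finset.range n).filter fun k => c < pv π k)
    (f := pv π) (fun x hx y hy hxy =>
      pv_inj π (by simp at hx; exact hx.1) (by simp at hy; exact hy.1) hxy)
  rw [himg, Nat.card_Ico] at this
  omega

end Basic

section Char
variable {n : ℕ} (π : Equiv.Perm (Fin n))

/-- Characterization of {231,312}-avoiders (layered permutations). -/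
def CondA : Prop := ∀ i ∈ ascents π, ∀ j ≤ i, pv π j ≤ i

/-- Characterization of {213,231}-avoiders. -/
def CondB : Prop := ∀ i j k : ℕ, i < j → j < n → i < k → k < n →
    ¬(pv π j < pv π i ∧ pv π i < pv π k)

lemma fin_lt_iff {i j : ℕ} (hi : i < n) (hj : j < n) :
    π ⟨i, hi⟩ < π ⟨j, hj⟩ ↔ pv π i < pv π j := by
  unfold pv
  rw [dif_pos hi, dif_pos hj, Fin.lt_def]

lemma condA_of_avoids (h231 : Avoids231 π) (h312 : Avoids312 π) : CondA π := by
  intro i hi j hj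
  obtain ⟨hin, hasc⟩ := (mem_ascents π).mp hi
  -- step: ∀ j ≤ i, ∀ k with i < k < n, pv π j < pv π k
  have step : ∀ j ≤ i, ∀ k, i < k → k < n → pv π j < pv π k := by
    intro j hj k hik hkn
    rcases lt_trichotomy (pv π j) (pv π k) with h | h | h
    · exact h
    · exact absurd (pv_inj π (by omega) hkn h) (by omega)
    · exfalso
      rcases Nat.eq_or_lt_of_le hj with rfl | hji
      · -- j = i
        by_cases he : k = j + 1
        · rw [he] at h; omega
        · have hk2 : j + 1 < k := by omega
          exact h231 ⟨⟨j, by omega⟩, ⟨j+1, by omega⟩, ⟨k, hkn⟩,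
            by simp [Fin.lt_def], by simp [Fin.lt_def]; omega,
            (fin_lt_iff π ..).mpr h, (fin_lt_iff π ..).mpr hasc⟩
      · rcases lt_trichotomy (pv π j) (pv π (i+1)) with h2 | h2 | h2
        · -- pv j < pv (i+1): k ≠ i+1, so k > i+1, 231 at (j, i+1, k)
          have hki : k ≠ i + 1 := by
            intro he; rw [he] at h; omega
          exact h231 ⟨⟨j, by omega⟩, ⟨i+1, by omega⟩, ⟨k, hkn⟩,
            by simp [Fin.lt_def]; omega, by simp [Fin.lt_def]; omega,
            (fin_lt_iff π ..).mpr h, (fin_lt_iff π ..).mpr h2⟩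
        · exact absurd (pv_inj π (by omega) (by omega) h2) (by omega)
        · -- pv (i+1) < pv j : 312 at (j, i, i+1)
          exact h312 ⟨⟨j, by omega⟩, ⟨i, by omega⟩, ⟨i+1, by omega⟩,
            by simp [Fin.lt_def]; omega, by simp [Fin.lt_def],
            (fin_lt_iff π ..).mpr hasc, (fin_lt_iff π ..).mpr h2⟩
  -- now: every later position maps above i
  have hsuf : ∀ k, i < k → k < n → i < pv π k := by
    intro k hik hkn
    have hT : (Finset.range (i+1)).image (pv π) ⊆ Finset.range (pv π k) := by
      intro v hv
      simp only [Finset.mem_image, Finset.mem_range] at hv ⊢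
      obtain ⟨m, hm, rfl⟩ := hv
      exact step m (by omega) k hik hkn
    have hcard := Finset.card_le_card hT
    rw [Finset.card_image_of_injOn (fun x hx y hy hxy =>
      pv_inj π (by simp at hx; omega) (by simp at hy; omega) hxy)] at hcard
    simp at hcard
    omega
  exact prefix_le π (by omega) hsuf hj

lemma avoids_of_condA (h : CondA π) : Avoids231 π ∧ Avoids312 π := by
  constructor
  · rintro ⟨i, j, k, hij, hjk, h1, h2⟩
    rw [Fin.lt_def] at hij hjk h1 h2
    -- pattern: π k < π i < π j, find ascent in [i, j)
    obtain ⟨a, ha1, ha2, ha3⟩ := exists_ascent π (j.1 - i.1) i.1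
      (by omega) (by rw [show i.1 + (j.1 - i.1) = j.1 from by omega]
                     simpa [pv, i.isLt, j.isLt] using h2)
    have hpre := h a ha3
    have hsk := suffix_gt π (fun m hm => hpre m hm) (by omega : a < k.1) k.isLt
    have hik : pv π i.1 ≤ a := hpre i.1 (by omega)
    simp only [pv, i.isLt, k.isLt, dif_pos] at hik hsk
    simp only [Fin.eta] at hik hsk
    omega
  · rintro ⟨i, j, k, hij, hjk, h1, h2⟩
    rw [Fin.lt_def] at hij hjk h1 h2
    -- pattern: π j < π k < π i, find ascent in [j, k)
    obtain ⟨a, ha1, ha2, ha3⟩ := exists_ascent π (k.1 - j.1) j.1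
      (by omega) (by rw [show j.1 + (k.1 - j.1) = k.1 from by omega]
                     simpa [pv, j.isLt, k.isLt] using h1)
    have hpre := h a ha3
    have hsk := suffix_gt π (fun m hm => hpre m hm) (by omega : a < k.1) k.isLt
    have hik : pv π i.1 ≤ a := hpre i.1 (by omega)
    simp only [pv, i.isLt, k.isLt, dif_pos] at hik hsk
    simp only [Fin.eta] at hik hsk
    omega

lemma condB_of_avoids (h213 : Avoids213 π) (h231 : Avoids231 π) : CondB π := by
  rintro i j k hij hjn hik hkn ⟨h1, h2⟩
  have hin : i < n := by omega
  rcases lt_trichotomy j k with hjk | rfl | hkj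
  · exact h213 ⟨⟨i, hin⟩, ⟨j, hjn⟩, ⟨k, hkn⟩, by simp [Fin.lt_def]; omega,
      by simp [Fin.lt_def]; omega, (fin_lt_iff π ..).mpr h1, (fin_lt_iff π ..).mpr h2⟩
  · omega
  · exact h231 ⟨⟨i, hin⟩, ⟨k, hkn⟩, ⟨j, hjn⟩, by simp [Fin.lt_def]; omega,
      by simp [Fin.lt_def]; omega, (fin_lt_iff π ..).mpr h1, (fin_lt_iff π ..).mpr h2⟩

lemma avoids_of_condB (h : CondB π) : Avoids213 π ∧ Avoids231 π := by
  constructor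
  · rintro ⟨i, j, k, hij, hjk, h1, h2⟩
    rw [Fin.lt_def] at hij hjk
    rw [fin_lt_iff π i.isLt k.isLt] at h2
    rw [fin_lt_iff π j.isLt i.isLt] at h1
    exact h i.1 j.1 k.1 hij j.isLt (by omega) k.isLt ⟨h1, h2⟩
  · rintro ⟨i, j, k, hij, hjk, h1, h2⟩
    rw [Fin.lt_def] at hij hjk
    rw [fin_lt_iff π i.isLt j.isLt] at h2
    rw [fin_lt_iff π k.isLt i.isLt] at h1
    exact h i.1 k.1 j.1 (by omega) k.isLt hij j.isLt ⟨h1, h2⟩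

end Char

section BE
variable (S : Finset ℕ)

lemma exists_notMem_add (i : ℕ) : ∃ m, i + m ∉ S :=
  ⟨S.sup id + 1, fun hmem => by
    have := Finset.le_sup (f := id) hmem; simp only [id] at this; omega⟩

/-- The least `j ≥ i` with `j ∉ S`. -/
def eend (i : ℕ) : ℕ := i + Nat.find (exists_notMem_add S i)

lemma eend_notMem (i : ℕ) : eend S i ∉ S := Nat.find_spec (exists_notMem_add S i)

lemma le_eend (i : ℕ) : i ≤ eend S i := Nat.le_add_right _ _

lemma eend_mem_of_between {i m : ℕ} (h1 : i ≤ m) (h2 : m < eend S i) : m ∈ S := by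
  have := Nat.find_min (exists_notMem_add S i) (m := m - i) (by unfold eend at h2; omega)
  rw [show i + (m - i) = m from by omega] at this
  exact not_not.mp this

lemma eend_le_of_notMem {i x : ℕ} (h1 : i ≤ x) (h2 : x ∉ S) : eend S i ≤ x := by
  have : Nat.find (exists_notMem_add S i) ≤ x - i :=
    Nat.find_le (by rw [show i + (x - i) = x from by omega]; exact h2)
  unfold eend; omega

lemma eend_unique {j x : ℕ} (h1 : j ≤ x) (h2 : x ∉ S)
    (h3 : ∀ m, j ≤ m → m < x → m ∈ S) : eend S j = x := by
  refine le_antisymm (eend_le_of_notMem S h1 h2) ?_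
  by_contra hc
  exact eend_notMem S j (h3 _ (le_eend S j) (by omega))

lemma eend_congr {i j : ℕ} (h1 : i ≤ j) (h2 : j ≤ eend S i) : eend S j = eend S i :=
  eend_unique S h2 (eend_notMem S i) (fun m hm hm' => eend_mem_of_between S (by omega) hm')

lemma eend_le_sub {i : ℕ} {n : ℕ} (hS : S ⊆ Finset.range (n-1)) (hi : i < n) :
    eend S i ≤ n - 1 := by
  apply eend_le_of_notMem S (by omega)
  intro hmem
  have := hS hmem
  simp at this

/-- The greatest `j ≤ i` such that `j = 0` or `j - 1 ∉ S`. -/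
def bstart : ℕ → ℕ
  | 0 => 0
  | (i+1) => if i ∈ S then bstart i else i + 1

lemma bstart_le (i : ℕ) : bstart S i ≤ i := by
  induction i with
  | zero => simp [bstart]
  | succ i ih =>
    unfold bstart
    split <;> omega

lemma bstart_succ (i : ℕ) : bstart S (i+1) = if i ∈ S then bstart S i else i + 1 := rfl

lemma bstart_mem_of_between : ∀ (i : ℕ) {m : ℕ}, bstart S i ≤ m → m < i → m ∈ S := by
  intro i
  induction i with
  | zero => intro m _ h; omega
  | succ i ih =>
    intro m h1 h2
    unfold bstart at h1
    split at h1
    · rcases Nat.lt_succ_iff_lt_or_eq.mp h2 with h | rfl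
      · exact ih h1 h
      · assumption
    · omega

lemma bstart_spec (i : ℕ) : bstart S i = 0 ∨ (bstart S i - 1 ∉ S ∧ 0 < bstart S i) := by
  induction i with
  | zero => left; rfl
  | succ i ih =>
    unfold bstart
    split
    · exact ih
    · right; simpa using ‹i ∉ S›

lemma bstart_unique : ∀ (j : ℕ) {x : ℕ}, x ≤ j → (x = 0 ∨ (x - 1 ∉ S ∧ 0 < x)) →
    (∀ m, x ≤ m → m < j → m ∈ S) → bstart S j = x := by
  intro j
  induction j with
  | zero => intro x h _ _; unfold bstart; omega
  | succ j ih =>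
    intro x h1 h2 h3
    unfold bstart
    split
    · by_cases hxj : x ≤ j
      · exact ih hxj h2 (fun m hm hm' => h3 m hm (by omega))
      · have hx : x = j + 1 := by omega
        subst hx
        rcases h2 with h | h
        · omega
        · exact absurd ‹j ∈ S› (by simpa using h.1)
    · -- j ∉ S : must have x = j + 1
      have hx : x = j + 1 := by
        by_contra hxe
        exact ‹j ∉ S› (h3 j (by omega) (by omega))
      omega

end BE

section PermA
variable {n : ℕ} (S : Finset ℕ)

def fA (i : ℕ) : ℕ := bstart S i + (eend S i - i)

lemma bstart_congr {i j : ℕ} (h1 : bstart S i ≤ j) (h2 : j ≤ i) : bstart S j = bstart S i :=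
  bstart_unique S j (by omega) (bstart_spec S i)
    (fun m hm hm' => bstart_mem_of_between S i hm (by omega))

lemma fA_lt (hS : S ⊆ Finset.range (n-1)) {i : ℕ} (hi : i < n) : fA S i < n := by
  have h1 := bstart_le S i
  have h2 := le_eend S i
  have h3 := eend_le_sub S hS hi
  unfold fA
  omega

lemma fA_mem_block (i : ℕ) :
    bstart S (fA S i) = bstart S i ∧ eend S (fA S i) = eend S i := by
  set b := bstart S i with hb
  set e := eend S i with he
  have hbi := bstart_le S i
  have hie := le_eend S i
  have hj1 : b ≤ fA S i := by unfold fA; omega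
  have hj2 : fA S i ≤ e := by unfold fA; omega
  have hmem : ∀ m, b ≤ m → m < e → m ∈ S := by
    intro m hm hm'
    rcases lt_or_ge m i with h | h
    · exact bstart_mem_of_between S i hm h
    · exact eend_mem_of_between S h hm'
  constructor
  · exact bstart_unique S _ hj1 (hb ▸ bstart_spec S i)
      (fun m hm hm' => hmem m hm (by omega))
  · exact eend_unique S hj2 (he ▸ eend_notMem S i)
      (fun m hm hm' => hmem m (by omega) hm')

lemma fA_invol (i : ℕ) : fA S (fA S i) = i := by
  obtain ⟨h1, h2⟩ := fA_mem_block S i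
  have hbi := bstart_le S i
  have hie := le_eend S i
  rw [show fA S (fA S i) = bstart S (fA S i) + (eend S (fA S i) - fA S i) from rfl, h1, h2]
  unfold fA
  omega

def permA (hS : S ⊆ Finset.range (n-1)) : Equiv.Perm (Fin n) :=
  Function.Involutive.toPerm (fun i => ⟨fA S i.1, fA_lt S hS i.isLt⟩)
    (fun i => Fin.ext (fA_invol S i.1))

lemma pv_permA (hS : S ⊆ Finset.range (n-1)) {i : ℕ} (hi : i < n) :
    pv (permA S hS) i = fA S i := by
  simp [pv, hi, permA, Function.Involutive.toPerm]

lemma eend_succ_of_mem {i : ℕ} (h : i ∈ S) : eend S (i+1) = eend S i := by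
  apply eend_congr S (by omega)
  have := le_eend S i
  rcases Nat.eq_or_lt_of_le this with he | h2
  · exact absurd h (he ▸ eend_notMem S i)
  · omega

lemma descents_permA (hS : S ⊆ Finset.range (n-1)) : descents (permA S hS) = S := by
  ext i
  rw [mem_descents]
  constructor
  · rintro ⟨hin, hd⟩
    by_contra hiS
    -- i ∉ S : then fA i ≤ i < fA (i+1), contradiction with descent
    have he : eend S i = i := eend_unique S (le_refl i) hiS (by omega)
    have hb1 : bstart S (i+1) = i + 1 := by rw [bstart_succ]; simp [hiS]
    rw [pv_permA S hS (by omega), pv_permA S hS (by omega)] at hd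
    unfold fA at hd
    rw [he, hb1] at hd
    have := bstart_le S i
    have := le_eend S (i+1)
    omega
  · intro hiS
    have hin : i < n - 1 := by simpa using hS hiS
    refine ⟨hin, ?_⟩
    rw [pv_permA S hS (by omega), pv_permA S hS (by omega)]
    have hb : bstart S (i+1) = bstart S i := by rw [bstart_succ]; simp [hiS]
    have he := eend_succ_of_mem S hiS
    have h1 : i + 1 ≤ eend S i := by
      rcases Nat.eq_or_lt_of_le (le_eend S i) with h | h
      · exact absurd hiS (h ▸ eend_notMem S i)
      · omega
    unfold fA
    rw [hb, he]
    have := bstart_le S i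
    omega

lemma condA_permA (hS : S ⊆ Finset.range (n-1)) : CondA (permA S hS) := by
  intro i hi j hj
  rw [ascents_eq_compl, descents_permA S hS, Finset.mem_sdiff, Finset.mem_range] at hi
  obtain ⟨hin, hiS⟩ := hi
  rw [pv_permA S hS (by omega)]
  have he : eend S j ≤ i := eend_le_of_notMem S hj hiS
  have := bstart_le S j
  have := le_eend S j
  unfold fA
  omega

/-- Uniqueness: a permutation satisfying `CondA` is determined by its descent set. -/
lemma valA (π : Equiv.Perm (Fin n)) (hC : CondA π) {i : ℕ} (hi : i < n) :
    pv π i = fA (descents π) i := by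
  set S := descents π with hSdef
  have hS : S ⊆ Finset.range (n-1) := descents_subset π
  set b := bstart S i with hb
  set e := eend S i with he
  have hbi := bstart_le S i
  have hie := le_eend S i
  have hen : e ≤ n - 1 := eend_le_sub S hS hi
  -- chain from i to e
  have h1 : pv π e + (e - i) ≤ pv π i := by
    have := desc_chain π (e - i) i (by omega)
      (fun m hm hm' => eend_mem_of_between S hm (by omega))
    rw [show i + (e - i) = e from by omega] at this
    exact this
  -- b ≤ pv π e
  have h2 : b ≤ pv π e := by
    rcases Nat.eq_zero_or_pos b with h0 | h0
    · omega
    · obtain hsp | hsp := bstart_spec S i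
      · omega
      · have hba : b - 1 ∈ ascents π := by
          rw [ascents_eq_compl, Finset.mem_sdiff, Finset.mem_range]
          exact ⟨by omega, hsp.1⟩
        have hpre := hC (b-1) hba
        have := suffix_gt π (fun m hm => hpre m hm) (by omega : b - 1 < e) (by omega)
        omega
  -- chain from b to i
  have h3 : pv π i + (i - b) ≤ pv π b := by
    have := desc_chain π (i - b) b (by omega)
      (fun m hm hm' => bstart_mem_of_between S i hm (by omega))
    rw [show b + (i - b) = i from by omega] at this
    exact this
  -- pv π b ≤ e
  have h4 : pv π b ≤ e := by
    rcases Nat.lt_or_ge e (n-1) with h | h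
    · have hea : e ∈ ascents π := by
        rw [ascents_eq_compl, Finset.mem_sdiff, Finset.mem_range]
        exact ⟨h, eend_notMem S i⟩
      exact hC e hea b (by omega)
    · have := pv_lt π (show b < n from by omega)
      omega
  unfold fA
  rw [← hb, ← he]
  omega

lemma eqA (π : Equiv.Perm (Fin n)) (hC : CondA π) :
    permA (descents π) (descents_subset π) = π := by
  apply Equiv.ext
  intro i
  apply Fin.ext
  have h1 := pv_permA (descents π) (descents_subset π) i.isLt
  have h2 := valA π hC i.isLt
  simp only [pv, i.isLt, dif_pos, Fin.eta] at h1 h2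
  rw [h1, ← h2]

end PermA

section PermB
variable {n : ℕ} (S : Finset ℕ)

def maxcnt (i : ℕ) : ℕ := ((Finset.range i).filter (· ∈ S)).card

def fB (n : ℕ) (i : ℕ) : ℕ := if i ∈ S then n - 1 - maxcnt S i else i - maxcnt S i

lemma maxcnt_le (i : ℕ) : maxcnt S i ≤ i := by
  have := Finset.card_filter_le (Finset.range i) (· ∈ S)
  simpa [maxcnt] using this

lemma maxcnt_succ (i : ℕ) :
    maxcnt S (i+1) = maxcnt S i + (if i ∈ S then 1 else 0) := by
  unfold maxcnt
  rw [Finset.range_add_one, Finset.filter_insert]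
  split <;> simp [Finset.mem_filter]

lemma maxcnt_mono {i j : ℕ} (h : i ≤ j) : maxcnt S i ≤ maxcnt S j :=
  Finset.card_le_card (Finset.filter_subset_filter _ (by simpa using Finset.range_subset_range.mpr h))

lemma maxcnt_le_card (i : ℕ) : maxcnt S i ≤ S.card :=
  Finset.card_le_card (fun x hx => (Finset.mem_filter.mp hx).2)

lemma maxcnt_strict {i j : ℕ} (hi : i ∈ S) (h : i < j) : maxcnt S i + 1 ≤ maxcnt S j := by
  have h1 := maxcnt_succ S i
  have h2 := maxcnt_mono S (show i + 1 ≤ j from h)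
  simp [hi] at h1
  omega

lemma mincnt_strict {i j : ℕ} (hi : i ∉ S) (h : i < j) :
    (i - maxcnt S i) + 1 ≤ j - maxcnt S j := by
  have h1 := maxcnt_succ S i
  simp [hi] at h1
  have key : ∀ d, (i + 1 - maxcnt S (i+1)) ≤ (i + 1 + d) - maxcnt S (i + 1 + d) := by
    intro d
    induction d with
    | zero => simp
    | succ d ih =>
      have h2 := maxcnt_succ S (i + 1 + d)
      have h3 := maxcnt_le S (i + 1 + d)
      rw [show i + 1 + (d+1) = (i + 1 + d) + 1 from by omega, h2]
      split <;> omega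
  have := key (j - (i+1))
  rw [show i + 1 + (j - (i+1)) = j from by omega] at this
  have h4 := maxcnt_le S i
  omega

variable (hS : S ⊆ Finset.range (n-1))
include hS

lemma card_le_nsub : S.card ≤ n - 1 := by
  have := Finset.card_le_card hS
  simpa using this

lemma fB_lt {i : ℕ} (hi : i < n) : fB S n i < n := by
  unfold fB
  split
  · omega
  · have := maxcnt_le S i; omega

lemma fB_strict {i j : ℕ} (hij : i < j) (hj : j < n) : fB S n i ≠ fB S n j := by
  have hcard := card_le_nsub S hS
  have hmi := maxcnt_le S i
  have hmj := maxcnt_le S j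
  have hmc := maxcnt_le_card S j
  unfold fB
  by_cases hiS : i ∈ S <;> by_cases hjS : j ∈ S <;> simp [hiS, hjS]
  · have := maxcnt_strict S hiS hij
    omega
  · have := maxcnt_strict S hiS hij
    omega
  · have := mincnt_strict S hiS hij
    have hjn : j < n - 1 := by simpa using hS hjS
    omega
  · have := mincnt_strict S hiS hij
    omega

noncomputable def permB : Equiv.Perm (Fin n) :=
  Equiv.ofBijective (fun i => (⟨fB S n i.1, fB_lt S hS i.isLt⟩ : Fin n))
    (Finite.injective_iff_bijective.mp (by
      intro a b hab
      by_contra hne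
      rcases lt_or_gt_of_ne (fun he : a = b => hne he) with h | h
      · exact fB_strict S hS (Fin.lt_def.mp h) b.isLt (congrArg Fin.val hab)
      · exact fB_strict S hS (Fin.lt_def.mp h) a.isLt (congrArg Fin.val hab).symm))

lemma pv_permB {i : ℕ} (hi : i < n) : pv (permB S hS) i = fB S n i := by
  simp [pv, hi, permB]

lemma descents_permB : descents (permB S hS) = S := by
  ext i
  rw [mem_descents]
  have hcard := card_le_nsub S hS
  constructor
  · rintro ⟨hin, hd⟩
    by_contra hiS
    rw [pv_permB S hS (by omega), pv_permB S hS (by omega)] at hd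
    have h1 := maxcnt_succ S i
    have hmi := maxcnt_le S i
    simp [hiS] at h1
    unfold fB at hd
    by_cases h2 : i + 1 ∈ S <;> simp [hiS, h2] at hd <;> omega
  · intro hiS
    have hin : i < n - 1 := by simpa using hS hiS
    refine ⟨hin, ?_⟩
    rw [pv_permB S hS (by omega), pv_permB S hS (by omega)]
    have h1 := maxcnt_succ S i
    have hmi := maxcnt_le S i
    have hmc := maxcnt_le_card S (i+1)
    simp [hiS] at h1
    unfold fB
    by_cases h2 : i + 1 ∈ S <;> simp [hiS, h2] <;> omega

lemma condB_permB : CondB (permB S hS) := by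
  have hcard := card_le_nsub S hS
  -- key monotonicity facts
  have key : ∀ i k, i < k → k < n → (i ∈ S → fB S n k < fB S n i) ∧ (i ∉ S → fB S n i < fB S n k) := by
    intro i k hik hkn
    have hmi := maxcnt_le S i
    have hmk := maxcnt_le S k
    have hmck := maxcnt_le_card S k
    constructor
    · intro hiS
      have h3 := maxcnt_strict S hiS hik
      unfold fB
      by_cases h2 : k ∈ S <;> simp [hiS, h2] <;> omega
    · intro hiS
      have h3 := mincnt_strict S hiS hik
      unfold fB
      by_cases h2 : k ∈ S <;> simp [hiS, h2]
      · have hkn' : k < n - 1 := by simpa using hS h2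
        omega
      · omega
  rintro i j k hij hjn hik hkn ⟨h1, h2⟩
  rw [pv_permB S hS hjn, pv_permB S hS (show i < n from by omega)] at h1
  rw [pv_permB S hS (show i < n from by omega), pv_permB S hS hkn] at h2
  by_cases hiS : i ∈ S
  · have := (key i k hik hkn).1 hiS
    omega
  · have := (key i j hij hjn).2 hiS
    omega

end PermB

section ValB
variable {n : ℕ} (π : Equiv.Perm (Fin n))

lemma typemax (hC : CondB π) {i : ℕ} (hi : i ∈ descents π) :
    ∀ k, i < k → k < n → pv π k < pv π i := by
  obtain ⟨hin, hd⟩ := (mem_descents π).mp hi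
  intro k hik hkn
  rcases lt_trichotomy (pv π k) (pv π i) with h | h | h
  · exact h
  · exact absurd (pv_inj π hkn (by omega) h) (by omega)
  · exact absurd ⟨hd, h⟩ (hC i (i+1) k (by omega) (by omega) hik hkn)

lemma typemin (hC : CondB π) {i : ℕ} (hin : i < n) (hi : i ∉ descents π) :
    ∀ k, i < k → k < n → pv π i < pv π k := by
  intro k hik hkn
  rcases Nat.lt_or_ge i (n-1) with h | h
  · have ha : i ∈ ascents π := by
      rw [ascents_eq_compl, Finset.mem_sdiff, Finset.mem_range]; exact ⟨h, hi⟩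
    obtain ⟨_, hasc⟩ := (mem_ascents π).mp ha
    rcases lt_trichotomy (pv π i) (pv π k) with h2 | h2 | h2
    · exact h2
    · exact absurd (pv_inj π hin hkn h2) (by omega)
    · exact absurd ⟨h2, hasc⟩ (hC i k (i+1) hik hkn (by omega) (by omega))
  · omega

lemma valB (hC : CondB π) {i : ℕ} (hi : i < n) :
    pv π i = fB (descents π) n i := by
  set S := descents π with hSdef
  have hpv := pv_lt π hi
  by_cases hiS : i ∈ S
  · -- pv π i = n - 1 - maxcnt S i
    have hset : (Finset.range n).filter (fun k => pv π i < pv π k)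
        = (Finset.range i).filter (· ∈ S) := by
      ext k
      simp only [Finset.mem_filter, Finset.mem_range]
      constructor
      · rintro ⟨hkn, hk⟩
        have hki : k < i := by
          rcases lt_trichotomy k i with h | rfl | h
          · exact h
          · omega
          · exact absurd (typemax π hC hiS k h hkn) (by omega)
        refine ⟨hki, ?_⟩
        by_contra hkS
        exact absurd (typemin π hC (by omega) hkS i hki hi) (by omega)
      · rintro ⟨hki, hkS⟩
        exact ⟨by omega, typemax π hC hkS i hki hi⟩
    have h1 := count_above π hpv
    rw [hset] at h1
    have h2 : maxcnt S i ≤ n - 1 := by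
      have := maxcnt_le_card S i
      have := card_le_nsub S (descents_subset π)
      omega
    unfold fB maxcnt
    simp only [hiS, if_pos]
    omega
  · -- pv π i = i - maxcnt S i
    have hset : (Finset.range n).filter (fun k => pv π k < pv π i)
        = (Finset.range i).filter (· ∉ S) := by
      ext k
      simp only [Finset.mem_filter, Finset.mem_range]
      constructor
      · rintro ⟨hkn, hk⟩
        have hki : k < i := by
          rcases lt_trichotomy k i with h | rfl | h
          · exact h
          · omega
          · exact absurd (typemin π hC hi hiS k h hkn) (by omega)
        refine ⟨hki, ?_⟩
        intro hkS
        exact absurd (typemax π hC hkS i hki hi) (by omega)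
      · rintro ⟨hki, hkS⟩
        exact ⟨by omega, typemin π hC (by omega) hkS i hki hi⟩
    have h1 := count_below π hpv
    rw [hset] at h1
    have h2 : ((Finset.range i).filter (· ∉ S)).card + ((Finset.range i).filter (· ∈ S)).card = i := by
      rw [add_comm]
      rw [Finset.card_filter_add_card_filter_not]
      · exact Finset.card_range i
    unfold fB maxcnt
    simp only [hiS, if_neg, not_false_iff]
    omega

lemma eqB (hC : CondB π) :
    permB (descents π) (descents_subset π) = π := by
  apply Equiv.ext
  intro i
  apply Fin.ext
  have h1 := pv_permB (descents π) (descents_subset π) i.isLt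
  have h2 := valB π hC i.isLt
  simp only [pv, i.isLt, dif_pos, Fin.eta] at h1 h2
  rw [h1, ← h2]

end ValB

section Final
variable {n : ℕ}

lemma stats_of_descents_eq (π σ : Equiv.Perm (Fin n)) (h : descents σ = descents π) :
    asc σ = asc π ∧ des σ = des π ∧ MNA σ = MNA π ∧ MND σ = MND π := by
  have hasc : ascents σ = ascents π := by
    rw [ascents_eq_compl, h, ← ascents_eq_compl]
  exact ⟨by rw [asc, hasc, asc], by rw [des, h, des],
    by rw [MNA, hasc, MNA], by rw [MND, h, MND]⟩

end Final

theorem equidistribution_231_312_vs_213_231 (n : ℕ) :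
    ∃ e : {π : Equiv.Perm (Fin n) // Avoids231 π ∧ Avoids312 π} ≃
          {σ : Equiv.Perm (Fin n) // Avoids213 σ ∧ Avoids231 σ},
      ∀ π, asc (e π).1 = asc π.1 ∧ des (e π).1 = des π.1 ∧
        MNA (e π).1 = MNA π.1 ∧ MND (e π).1 = MND π.1 := by
  classical
  refine ⟨{
    toFun := fun π => ⟨permB (descents π.1) (descents_subset π.1),
      avoids_of_condB _ (condB_permB _ (descents_subset π.1))⟩
    invFun := fun σ => ⟨permA (descents σ.1) (descents_subset σ.1),
      avoids_of_condA _ (condA_permA _ (descents_subset σ.1))⟩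
    left_inv := ?_
    right_inv := ?_ }, ?_⟩
  · rintro ⟨π, h1, h2⟩
    apply Subtype.ext
    simp only
    have key : ∀ (T : Finset ℕ) (hT : T ⊆ Finset.range (n-1)) (T' : Finset ℕ)
        (hT' : T' ⊆ Finset.range (n-1)), T = T' → permA T hT = permA T' hT' := by
      rintro T hT T' hT' rfl; rfl
    rw [key _ _ _ (descents_subset π) (descents_permB _ _),
      eqA π (condA_of_avoids π h1 h2)]
  · rintro ⟨σ, h1, h2⟩
    apply Subtype.ext
    simp only
    have key : ∀ (T : Finset ℕ) (hT : T ⊆ Finset.range (n-1)) (T' : Finset ℕ)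
        (hT' : T' ⊆ Finset.range (n-1)), T = T' → permB T hT = permB T' hT' := by
      rintro T hT T' hT' rfl; rfl
    rw [key _ _ _ (descents_subset σ) (descents_permA (descents σ) (descents_subset σ)),
      eqB σ (condB_of_avoids σ h1 h2)]
  · rintro ⟨π, h1, h2⟩
    exact stats_of_descents_eq π _ (descents_permB (descents π) (descents_subset π))
end

section
/- The number of permutations in S_n(231,312) with exactly k descents equals the binomial coefficient C(n-1, k), for all n ≥ 1 and 0 ≤ k ≤ n-1. -/
namespace AvoidAux

variable (S : Finset ℕ)

lemma exR (i : ℕ) : ∃ m, i + m ∉ S :=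
  ⟨S.sup id + 1, fun h => by have := Finset.le_sup (f := id) h; simp only [id_eq] at this; omega⟩

/-- length of the run of elements of `S` starting at `i`. -/
def rr (i : ℕ) : ℕ := Nat.find (exR S i)

lemma rr_spec (i : ℕ) : i + rr S i ∉ S := Nat.find_spec (exR S i)

lemma rr_min {i m : ℕ} (h : m < rr S i) : i + m ∈ S := by
  have := Nat.find_min (exR S i) h
  simpa using this

lemma exL (i : ℕ) : ∃ m, i ≤ m ∨ i - 1 - m ∉ S := ⟨i, Or.inl le_rfl⟩

/-- length of the run of elements of `S` ending at `i - 1`. -/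
def ll (i : ℕ) : ℕ := Nat.find (exL S i)

lemma ll_le (i : ℕ) : ll S i ≤ i := Nat.find_le (Or.inl le_rfl)

lemma ll_spec (i : ℕ) : i ≤ ll S i ∨ i - 1 - ll S i ∉ S := Nat.find_spec (exL S i)

lemma ll_min {i m : ℕ} (h : m < ll S i) : m < i ∧ i - 1 - m ∈ S := by
  have := Nat.find_min (exL S i) h
  push_neg at this
  exact this

/-- The block evaluation lemma: if `[a, b)` is a run of `S` with proper boundaries,
then any `j` in `[a, b]` has `ll = j - a` and `rr = b - j`. -/
lemma eval_of (a b j : ℕ) (hab : a ≤ j) (hjb : j ≤ b)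
    (hmem : ∀ x, a ≤ x → x < b → x ∈ S) (hb : b ∉ S) (ha : a = 0 ∨ a - 1 ∉ S) :
    ll S j = j - a ∧ rr S j = b - j := by
  constructor
  · rw [ll, Nat.find_eq_iff]
    constructor
    · rcases ha with h | h
      · subst h; left; omega
      · right
        have h2 : j - 1 - (j - a) = a - 1 := by omega
        rw [h2]; exact h
    · intro m hm
      push_neg
      refine ⟨by omega, hmem _ (by omega) (by omega)⟩
  · rw [rr, Nat.find_eq_iff]
    constructor
    · have h2 : j + (b - j) = b := by omega
      rw [h2]; exact hb
    · intro m hm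
      push_neg
      exact hmem _ (by omega) (by omega)

lemma blk_mem {i x : ℕ} (h1 : i - ll S i ≤ x) (h2 : x < i + rr S i) : x ∈ S := by
  rcases lt_or_ge x i with h | h
  · have hll := ll_le S i
    have := ll_min S (i := i) (m := i - 1 - x) (by omega)
    have h3 : i - 1 - (i - 1 - x) = x := by omega
    rw [h3] at this
    exact this.2
  · have := rr_min S (i := i) (m := x - i) (by omega)
    have h3 : i + (x - i) = x := by omega
    rwa [h3] at this

lemma blk_ha (i : ℕ) : i - ll S i = 0 ∨ (i - ll S i) - 1 ∉ S := by
  rcases eq_or_lt_of_le (ll_le S i) with h | h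
  · left; omega
  · rcases ll_spec S i with h2 | h2
    · omega
    · right
      have h3 : (i - ll S i) - 1 = i - 1 - ll S i := by omega
      rw [h3]; exact h2

lemma blk_eval {i j : ℕ} (h1 : i - ll S i ≤ j) (h2 : j ≤ i + rr S i) :
    ll S j = j - (i - ll S i) ∧ rr S j = (i + rr S i) - j :=
  eval_of S _ _ j h1 h2 (fun _ hx1 hx2 => blk_mem S hx1 hx2) (rr_spec S i) (blk_ha S i)

/-- The canonical permutation-value function determined by descent set `S`. -/
def f (i : ℕ) : ℕ := (i - ll S i) + rr S i

lemma f_eval {i j : ℕ} (h1 : i - ll S i ≤ j) (h2 : j ≤ i + rr S i) :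
    f S j = (i - ll S i) + ((i + rr S i) - j) := by
  obtain ⟨h3, h4⟩ := blk_eval S h1 h2
  have := ll_le S i
  unfold f
  omega

lemma f_le (i : ℕ) : f S i ≤ i + rr S i := by
  have := ll_le S i; unfold f; omega

lemma le_f (i : ℕ) : i - ll S i ≤ f S i := by unfold f; omega

lemma f_invol (i : ℕ) : f S (f S i) = i := by
  have h0 := ll_le S i
  have h1 : i - ll S i ≤ f S i := le_f S i
  have h2 : f S i ≤ i + rr S i := f_le S i
  have h3 := f_eval S h1 h2
  unfold f at h3 ⊢
  omega

lemma f_cross {x y : ℕ} (h : x + rr S x < y) : f S x < f S y := by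
  have h1 : ll S y ≤ y - (x + rr S x) - 1 := by
    unfold ll
    apply Nat.find_le
    right
    have h2 : y - 1 - (y - (x + rr S x) - 1) = x + rr S x := by omega
    rw [h2]; exact rr_spec S x
  have h2 := f_le S x
  have h3 := le_f S y
  omega

lemma f_anti {i j : ℕ} (hij : i < j) (hj : j ≤ i + rr S i) : f S j < f S i := by
  have h0 := ll_le S i
  have h1 := f_eval S (i := i) (j := j) (by omega) hj
  have h2 := f_eval S (i := i) (j := i) (by omega) (by omega)
  omega

lemma rr_pos {i : ℕ} (h : i ∈ S) : 1 ≤ rr S i := by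
  by_contra h2
  have h3 : rr S i = 0 := by omega
  have := rr_spec S i
  rw [h3] at this
  simp at this
  exact this h

lemma rr_zero {i : ℕ} (h : i ∉ S) : rr S i = 0 := by
  by_contra h2
  exact h (by simpa using rr_min S (i := i) (m := 0) (by omega))

lemma ll_zero {i : ℕ} (h : i = 0 ∨ i - 1 ∉ S) : ll S i = 0 := by
  rw [ll, Nat.find_eq_zero]
  rcases h with h | h
  · left; omega
  · right; simpa using h

end AvoidAux

namespace AvoidAux

variable {n : ℕ} (S : Finset ℕ)

lemma b_lt (hS : S ⊆ Finset.range (n - 1)) {i : ℕ} (hi : i < n) : i + rr S i < n := by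
  rcases Nat.eq_zero_or_pos (rr S i) with h | h
  · omega
  · have h2 : i + (rr S i - 1) ∈ S := rr_min S (by omega)
    have h3 := hS h2
    simp only [Finset.mem_range] at h3
    omega

lemma f_lt (hS : S ⊆ Finset.range (n - 1)) {i : ℕ} (hi : i < n) : f S i < n := by
  have := f_le S i
  have := b_lt S hS hi
  omega

/-- The permutation of `Fin n` determined by the descent set `S`. -/
def pmap (hS : S ⊆ Finset.range (n - 1)) : Equiv.Perm (Fin n) :=
  Function.Involutive.toPerm (fun x => ⟨f S x, f_lt S hS x.2⟩)
    (fun x => Fin.ext (f_invol S x))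

lemma pmap_apply (hS : S ⊆ Finset.range (n - 1)) (x : Fin n) :
    (pmap S hS x : ℕ) = f S x := rfl

lemma pv_pmap (hS : S ⊆ Finset.range (n - 1)) {i : ℕ} (hi : i < n) :
    pv (pmap S hS) i = f S i := by
  simp only [pv, dif_pos hi]
  rfl

lemma descents_pmap (hS : S ⊆ Finset.range (n - 1)) : descents (pmap S hS) = S := by
  ext x
  simp only [descents, Finset.mem_filter, Finset.mem_range]
  constructor
  · rintro ⟨hx, hd⟩
    have hx1 : x < n := by omega
    have hx2 : x + 1 < n := by omega
    rw [pv_pmap S hS hx1, pv_pmap S hS hx2] at hd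
    by_contra hxS
    have h0 : rr S x = 0 := rr_zero S hxS
    have h1 : ll S (x + 1) = 0 := ll_zero S (by right; simpa using hxS)
    have h2 := f_le S x
    have h3 := le_f S (x + 1)
    omega
  · intro hxS
    have hx : x < n - 1 := by simpa using hS hxS
    have hx1 : x < n := by omega
    have hx2 : x + 1 < n := by omega
    refine ⟨hx, ?_⟩
    rw [pv_pmap S hS hx1, pv_pmap S hS hx2]
    exact f_anti S (by omega) (by have := rr_pos S hxS; omega)

lemma avoids231_pmap (hS : S ⊆ Finset.range (n - 1)) : Avoids231 (pmap S hS) := by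
  rintro ⟨i, j, k, hij, hjk, h1, h2⟩
  rw [Fin.lt_def] at hij hjk h1 h2
  rw [pmap_apply, pmap_apply] at h1 h2
  have hk : (k : ℕ) ≤ i + rr S i := by
    by_contra h
    have := f_cross S (x := (i : ℕ)) (y := (k : ℕ)) (by omega)
    omega
  have := f_anti S (i := (i : ℕ)) (j := (j : ℕ)) hij (by omega)
  omega

lemma avoids312_pmap (hS : S ⊆ Finset.range (n - 1)) : Avoids312 (pmap S hS) := by
  rintro ⟨i, j, k, hij, hjk, h1, h2⟩
  rw [Fin.lt_def] at hij hjk h1 h2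
  rw [pmap_apply, pmap_apply] at h1 h2
  have hk : (k : ℕ) ≤ i + rr S i := by
    by_contra h
    have := f_cross S (x := (i : ℕ)) (y := (k : ℕ)) (by omega)
    omega
  have hll := ll_le S i
  have hj := blk_eval S (i := (i : ℕ)) (j := (j : ℕ)) (by omega) (by omega)
  have := f_anti S (i := (j : ℕ)) (j := (k : ℕ)) hjk (by omega)
  omega

end AvoidAux

namespace AvoidAux

variable {n : ℕ}

lemma mem_descents {π : Equiv.Perm (Fin n)} {x : ℕ} :
    x ∈ descents π ↔ x < n - 1 ∧ pv π (x + 1) < pv π x := by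
  simp [descents, Finset.mem_filter, Finset.mem_range]

lemma pv_eq (π : Equiv.Perm (Fin n)) {i : ℕ} (h : i < n) : pv π i = (π ⟨i, h⟩ : ℕ) := by
  simp [pv, dif_pos h]

/-- descents drop by exactly one in a (231,312)-avoiding permutation -/
lemma stepA {π : Equiv.Perm (Fin n)} (h231 : Avoids231 π) (h312 : Avoids312 π)
    {i j : Fin n} (hij : (j : ℕ) = (i : ℕ) + 1) (hd : (π j : ℕ) < π i) :
    (π i : ℕ) = (π j : ℕ) + 1 := by
  by_contra hne
  have hvn : (π j : ℕ) + 1 < n := by have := (π i).2; omega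
  obtain ⟨p, hpv⟩ : ∃ p, π p = ⟨(π j : ℕ) + 1, hvn⟩ := ⟨π.symm _, Equiv.apply_symm_apply _ _⟩
  have h1 : (π p : ℕ) = (π j : ℕ) + 1 := by rw [hpv]
  have hpi : p ≠ i := by intro h; rw [h] at h1; omega
  have hpj : (p : ℕ) ≠ (j : ℕ) := by
    intro h; rw [Fin.ext h] at h1; omega
  rcases lt_trichotomy (p : ℕ) (i : ℕ) with h | h | h
  · exact h231 ⟨p, i, j, Fin.lt_def.2 h, Fin.lt_def.2 (by omega),
      by rw [Fin.lt_def]; omega, by rw [Fin.lt_def]; omega⟩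
  · exact hpi (Fin.ext h)
  · exact h312 ⟨i, j, p, Fin.lt_def.2 (by omega), Fin.lt_def.2 (by omega),
      by rw [Fin.lt_def]; omega, by rw [Fin.lt_def]; omega⟩

end AvoidAux

namespace AvoidAux

variable {n : ℕ}

theorem eqF {π : Equiv.Perm (Fin n)} (h231 : Avoids231 π) (h312 : Avoids312 π)
    (i : ℕ) (hi : i < n) : (π ⟨i, hi⟩ : ℕ) = f (descents π) i := by
  revert hi
  induction i using Nat.strong_induction_on with
  | _ i IH =>
    intro hi
    set S := descents π with hSdef
    have hS : S ⊆ Finset.range (n - 1) := Finset.filter_subset _ _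
    by_cases hbs : i = 0 ∨ i - 1 ∉ S
    · -- block start case
      have hbn : i + rr S i < n := b_lt S hS hi
      have hsmall : ∀ j, j < i → f S j < i := by
        intro j hj
        have hble : j + rr S j < i := by
          by_contra hle
          have h3 : (i - 1) ∈ S :=
            blk_mem S (i := j) (x := i - 1) (by have := ll_le S j; omega) (by omega)
          rcases hbs with h | h
          · omega
          · exact h h3
        have := f_le S j
        omega
      have hvals : ∀ z : Fin n, (z : ℕ) < i → (π z : ℕ) < i := by
        intro z hz
        have h4 := IH z hz z.2
        simp only [Fin.eta] at h4
        rw [h4]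
        exact hsmall z hz
      have hbig : ∀ x : Fin n, i ≤ (x : ℕ) → i ≤ (π x : ℕ) := by
        intro x hx
        by_contra hlt
        push_neg at hlt
        have hsub : ∀ m ∈ Finset.range i, m < n := fun m hm => by
          simp only [Finset.mem_range] at hm; omega
        have hxT : x ∉ (Finset.range i).attachFin hsub := by
          rw [Finset.mem_attachFin, Finset.mem_range]
          omega
        have hcardT : (insert x ((Finset.range i).attachFin hsub)).card = i + 1 := by
          rw [Finset.card_insert_of_notMem hxT, Finset.card_attachFin, Finset.card_range]
        have himg : (insert x ((Finset.range i).attachFin hsub)).image π ⊆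
            (Finset.range i).attachFin hsub := by
          intro y hy
          simp only [Finset.mem_image] at hy
          obtain ⟨z, hz, rfl⟩ := hy
          rw [Finset.mem_attachFin, Finset.mem_range]
          rw [Finset.mem_insert] at hz
          rcases hz with rfl | hz
          · exact hlt
          · rw [Finset.mem_attachFin, Finset.mem_range] at hz
            exact hvals z hz
        have hcc := Finset.card_le_card himg
        rw [Finset.card_image_of_injective _ π.injective, hcardT, Finset.card_attachFin,
          Finset.card_range] at hcc
        omega
      have hrun : ∀ m, m ≤ rr S i → ∀ (h : i + m < n),
          (π ⟨i + m, h⟩ : ℕ) + m = (π ⟨i, hi⟩ : ℕ) := by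
        intro m
        induction m with
        | zero =>
          intro _ h
          have he : (⟨i + 0, h⟩ : Fin n) = ⟨i, hi⟩ := Fin.ext (show i + 0 = i by omega)
          rw [he]
          omega
        | succ m IHm =>
          intro hm1 h
          have h1 : i + m < n := by omega
          have h2 : i + m + 1 < n := by omega
          have hmS : i + m ∈ descents π := by
            rw [← hSdef]; exact rr_min S (by omega)
          have hd := (mem_descents.1 hmS).2
          rw [pv_eq π h1, pv_eq π h2] at hd
          have hA := stepA h231 h312 (i := ⟨i + m, h1⟩)
            (j := ⟨i + m + 1, h2⟩) rfl hd
          have h7 := IHm (by omega) h1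
          have he : (⟨i + (m + 1), h⟩ : Fin n) = (⟨i + m + 1, h2⟩ : Fin n) :=
            Fin.ext (show i + (m + 1) = i + m + 1 by omega)
          rw [he]
          omega
      have hfS : f S i = i + rr S i := by
        have := ll_zero S hbs
        unfold f
        omega
      rw [hfS]
      have h5 := hrun (rr S i) le_rfl hbn
      have h6 : i ≤ (π ⟨i + rr S i, hbn⟩ : ℕ) := hbig _ (Nat.le_add_right i _)
      by_contra hne
      have hgt : i + rr S i < (π ⟨i, hi⟩ : ℕ) := by omega
      obtain ⟨p, hpv⟩ : ∃ p, π p = ⟨i, hi⟩ := ⟨π.symm _, Equiv.apply_symm_apply _ _⟩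
      have hpvv : (π p : ℕ) = i := by rw [hpv]
      have hpge : i ≤ (p : ℕ) := by
        by_contra h
        have := hvals p (by omega)
        omega
      have hpgt : i + rr S i < (p : ℕ) := by
        rcases Nat.lt_or_ge (i + rr S i) (p : ℕ) with h | h
        · exact h
        · exfalso
          have hX : i + ((p : ℕ) - i) < n := by omega
          have h7 := hrun _ (by omega) hX
          have hpe : p = ⟨i + ((p : ℕ) - i), hX⟩ :=
            Fin.ext (show (p : ℕ) = i + ((p : ℕ) - i) by omega)
          rw [hpe] at hpvv
          omega
      have hbn1 : i + rr S i + 1 < n := by have := p.2; omega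
      have hasc : (π ⟨i + rr S i, hbn⟩ : ℕ) < (π ⟨i + rr S i + 1, hbn1⟩ : ℕ) := by
        have h8 : i + rr S i ∉ descents π := hSdef ▸ rr_spec S i
        rw [mem_descents] at h8
        push_neg at h8
        have h9 := h8 (by omega)
        rw [pv_eq π hbn1, pv_eq π hbn] at h9
        rcases lt_or_eq_of_le h9 with h | h
        · exact h
        · exfalso
          have h10 := congrArg Fin.val (π.injective (Fin.ext h))
          simp only [Fin.val_mk] at h10
          omega
      have hπb : i < (π ⟨i + rr S i, hbn⟩ : ℕ) := by omega
      rcases Nat.lt_or_ge (i + rr S i + 1) (p : ℕ) with h | h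
      · exact h231 ⟨⟨i + rr S i, hbn⟩, ⟨i + rr S i + 1, hbn1⟩, p,
          Fin.mk_lt_mk.2 (by omega),
          Fin.lt_def.2 (show i + rr S i + 1 < (p : ℕ) from h),
          Fin.lt_def.2 (show (π p : ℕ) < (π ⟨i + rr S i, hbn⟩ : ℕ) by omega),
          Fin.lt_def.2 hasc⟩
      · have hpe : p = ⟨i + rr S i + 1, hbn1⟩ :=
          Fin.ext (show (p : ℕ) = i + rr S i + 1 by omega)
        rw [hpe] at hpvv
        omega
    · -- non-block-start case
      push_neg at hbs
      obtain ⟨h0, hmem⟩ := hbs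
      obtain ⟨m, rfl⟩ : ∃ m, i = m + 1 := ⟨i - 1, by omega⟩
      simp only [Nat.add_sub_cancel] at hmem
      have hm : m < n := by omega
      have hd := (mem_descents.1 (hSdef ▸ hmem)).2
      rw [pv_eq π hm, pv_eq π hi] at hd
      have hA := stepA h231 h312 (i := ⟨m, hm⟩) (j := ⟨m + 1, hi⟩) rfl hd
      have hIH := IH m (by omega) hm
      have hr := rr_pos S hmem
      have hll := ll_le S m
      have h1 := f_eval S (i := m) (j := m + 1) (by omega) (by omega)
      have h2 := f_eval S (i := m) (j := m) (by omega) (by omega)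
      omega

end AvoidAux

open AvoidAux in
theorem card_avoid_231_312_with_descents (n k : ℕ) (hn : 1 ≤ n) (hk : k ≤ n - 1) :
    Nat.card {π : Equiv.Perm (Fin n) // (Avoids231 π ∧ Avoids312 π) ∧ des π = k} =
      Nat.choose (n - 1) k := by
  classical
  have e : {π : Equiv.Perm (Fin n) // (Avoids231 π ∧ Avoids312 π) ∧ des π = k} ≃
      {S : Finset ℕ // S ∈ Finset.powersetCard k (Finset.range (n - 1))} :=
    { toFun := fun p => ⟨descents p.1, by
        rw [Finset.mem_powersetCard]
        exact ⟨Finset.filter_subset _ _, p.2.2⟩⟩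
      invFun := fun s => ⟨pmap s.1 (Finset.mem_powersetCard.1 s.2).1,
        ⟨⟨avoids231_pmap _ _, avoids312_pmap _ _⟩, by
          show (descents _).card = k
          rw [descents_pmap]
          exact (Finset.mem_powersetCard.1 s.2).2⟩⟩
      left_inv := fun p => Subtype.ext (Equiv.ext fun x => Fin.ext (by
        rw [pmap_apply]
        have h4 := eqF p.2.1.1 p.2.1.2 (x : ℕ) x.2
        simp only [Fin.eta] at h4
        exact h4.symm))
      right_inv := fun s => Subtype.ext (descents_pmap s.1 (Finset.mem_powersetCard.1 s.2).1) }
  rw [Nat.card_congr e, Nat.card_eq_fintype_card, Fintype.card_coe,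
    Finset.card_powersetCard, Finset.card_range]
end

section
/- The number of permutations in S_n(213,312) with exactly k left-to-right maxima equals the binomial coefficient C(n-1, k-1), for all n ≥ 1 and 1 ≤ k ≤ n. -/
namespace CardAux
open Finset

variable {n : ℕ}

/-- Avoiding 213 and 312 is equivalent to having no "valley" triple. -/
def Uni (π : Equiv.Perm (Fin n)) : Prop :=
  ∀ i j l : Fin n, i < j → j < l → π j < π i → π j < π l → False

lemma avoids_iff_uni (π : Equiv.Perm (Fin n)) :
    (Avoids213 π ∧ Avoids312 π) ↔ Uni π := by
  constructor
  · rintro ⟨h1, h2⟩ i j l hij hjl h3 h4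
    rcases lt_trichotomy (π i) (π l) with h | h | h
    · exact h1 ⟨i, j, l, hij, hjl, h3, h⟩
    · exact (hij.trans hjl).ne (π.injective h)
    · exact h2 ⟨i, j, l, hij, hjl, h4, h⟩
  · intro hU
    constructor
    · rintro ⟨i, j, l, hij, hjl, h3, h4⟩
      exact hU i j l hij hjl h3 (h3.trans h4)
    · rintro ⟨i, j, l, hij, hjl, h3, h4⟩
      exact hU i j l hij hjl (h3.trans h4) h3

lemma lt_top_of_ne {π : Equiv.Perm (Fin n)} {top : Fin n}
    (htop : ∀ x : Fin n, x ≤ top) {x : Fin n} (hx : x ≠ π.symm top) :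
    π x < top :=
  lt_of_le_of_ne (htop _) fun h => hx (by rw [← h, Equiv.symm_apply_apply])

lemma prefix_mono {π : Equiv.Perm (Fin n)} (hU : Uni π) {top : Fin n}
    (htop : ∀ x : Fin n, x ≤ top) {i j : Fin n} (hij : i < j) (hj : j ≤ π.symm top) :
    π i < π j := by
  rcases eq_or_lt_of_le hj with rfl | hjm
  · rw [π.apply_symm_apply]
    exact lt_top_of_ne htop hij.ne
  · by_contra hc
    have hne : π j ≠ π i := fun h => hij.ne' (π.injective h)
    have h1 : π j < π i := lt_of_le_of_ne (not_lt.1 hc) hne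
    have h2 : π j < π (π.symm top) := by
      rw [π.apply_symm_apply]; exact lt_top_of_ne htop hjm.ne
    exact hU i j (π.symm top) hij hjm h1 h2

lemma suffix_anti {π : Equiv.Perm (Fin n)} (hU : Uni π) {top : Fin n}
    (htop : ∀ x : Fin n, x ≤ top) {i j : Fin n} (hi : π.symm top ≤ i) (hij : i < j) :
    π j < π i := by
  rcases eq_or_lt_of_le hi with rfl | hmi
  · rw [π.apply_symm_apply]
    exact lt_top_of_ne htop hij.ne'
  · by_contra hc
    have hne : π i ≠ π j := fun h => hij.ne (π.injective h)
    have h1 : π i < π j := lt_of_le_of_ne (not_lt.1 hc) hne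
    have h2 : π i < π (π.symm top) := by
      rw [π.apply_symm_apply]; exact lt_top_of_ne htop hmi.ne'
    exact hU (π.symm top) i j hmi hij h2 h1

lemma lrmax_eq {π : Equiv.Perm (Fin n)} (hU : Uni π) {top : Fin n}
    (htop : ∀ x : Fin n, x ≤ top) : lrmax π = (π.symm top : ℕ) + 1 := by
  have key : ∀ i : Fin n, IsLRMax π i ↔ i ≤ π.symm top := by
    intro i
    constructor
    · intro h
      by_contra hc
      push_neg at hc
      exact absurd (h _ hc) (not_lt.2 (suffix_anti hU htop le_rfl hc).le)
    · intro h j hj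
      exact prefix_mono hU htop hj h
  unfold lrmax
  rw [Nat.card_congr (Equiv.subtypeEquivRight key), Nat.card_eq_fintype_card,
    Fintype.card_subtype]
  have hfil : (univ.filter fun i : Fin n => i ≤ π.symm top) = Iic (π.symm top) := by
    ext x; simp
  rw [hfil, Fin.card_Iic]

lemma eq_of_data {π σ : Equiv.Perm (Fin n)} (hUπ : Uni π) (hUσ : Uni σ) {top : Fin n}
    (htop : ∀ x : Fin n, x ≤ top)
    (hm : π.symm top = σ.symm top)
    (him : (Iio (π.symm top)).image π = (Iio (σ.symm top)).image σ) : π = σ := by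
  set m : Fin n := π.symm top with hmdef
  have hn : 0 < n := m.pos
  set S : Finset (Fin n) := (Iio m).image π with hSdef
  have hScard : S.card = (m : ℕ) := by
    rw [hSdef, Finset.card_image_of_injective _ π.injective, Fin.card_Iio]
  have him' : (Iio m).image σ = S := by
    rw [him, hm]
  have hStop : top ∉ S := by
    intro hmem
    obtain ⟨i, hi, hix⟩ := Finset.mem_image.1 hmem
    have : i = m := π.injective (hix.trans (π.apply_symm_apply top).symm)
    rw [this] at hi
    exact absurd (Finset.mem_Iio.1 hi) (lt_irrefl _)
  set T : Finset (Fin n) := univ \ insert top S with hTdef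
  have hT : T.card = n - 1 - (m : ℕ) := by
    rw [hTdef, Finset.card_sdiff_of_subset (Finset.subset_univ _),
      Finset.card_insert_of_notMem hStop, hScard, Finset.card_univ, Fintype.card_fin]
    omega
  -- region 1
  have hmlt := m.isLt
  have hreg1 : ∀ a : ℕ, ∀ h : a < (m : ℕ), π ⟨a, h.trans hmlt⟩ = σ ⟨a, h.trans hmlt⟩ := by
    have key : ∀ (τ : Equiv.Perm (Fin n)), Uni τ → τ.symm top = m →
        (Iio m).image τ = S → ∀ a : ℕ, ∀ h : a < (m : ℕ),
        τ ⟨a, h.trans hmlt⟩ = S.orderEmbOfFin hScard ⟨a, h⟩ := by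
      intro τ hUτ hτm hτS a h
      have hmono : StrictMono (fun b : Fin (m : ℕ) => τ ⟨b.1, b.2.trans hmlt⟩) := by
        intro b c hbc
        refine prefix_mono hUτ htop ?_ ?_
        · exact hbc
        · rw [hτm]; exact le_of_lt (by exact c.2)
      have hmem : ∀ b : Fin (m : ℕ), τ ⟨b.1, b.2.trans hmlt⟩ ∈ S := by
        intro b
        rw [← hτS]
        exact Finset.mem_image.2 ⟨⟨b.1, b.2.trans hmlt⟩, Finset.mem_Iio.2 b.2, rfl⟩
      have := Finset.orderEmbOfFin_unique hScard hmem hmono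
      exact congrFun this ⟨a, h⟩
    intro a h
    rw [key π hUπ rfl rfl a h, key σ hUσ hm.symm him' a h]
  -- region 3
  set r : ℕ := n - 1 - (m : ℕ) with hrdef
  have hreg3 : ∀ a : ℕ, ∀ h : a < r, π ⟨n - 1 - a, by omega⟩ = σ ⟨n - 1 - a, by omega⟩ := by
    have key : ∀ (τ : Equiv.Perm (Fin n)), Uni τ → τ.symm top = m →
        (Iio m).image τ = S → ∀ a : ℕ, ∀ h : a < r,
        τ ⟨n - 1 - a, by omega⟩ = T.orderEmbOfFin hT ⟨a, h⟩ := by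
      intro τ hUτ hτm hτS a h
      have hmono : StrictMono (fun b : Fin r => τ ⟨n - 1 - b.1, by have := b.2; omega⟩) := by
        intro b c hbc
        have hb2 := b.2; have hc2 := c.2
        refine suffix_anti hUτ htop (i := ⟨n - 1 - c.1, by omega⟩)
          (j := ⟨n - 1 - b.1, by omega⟩) ?_ ?_
        · rw [hτm]
          show (m : ℕ) ≤ n - 1 - c.1
          omega
        · show n - 1 - c.1 < n - 1 - b.1
          omega
      have hmem : ∀ b : Fin r, τ ⟨n - 1 - b.1, by have := b.2; omega⟩ ∈ T := by
        intro b
        have hb2 := b.2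
        have hgt : (m : ℕ) < n - 1 - b.1 := by omega
        rw [hTdef, Finset.mem_sdiff]
        refine ⟨Finset.mem_univ _, ?_⟩
        intro hmem
        rcases Finset.mem_insert.1 hmem with hx | hx
        · have : (⟨n - 1 - b.1, by omega⟩ : Fin n) = m :=
            ((Equiv.eq_symm_apply τ).2 hx).trans hτm
          have := congrArg Fin.val this
          simp only at this
          omega
        · rw [← hτS] at hx
          obtain ⟨i, hi, hix⟩ := Finset.mem_image.1 hx
          have : i = ⟨n - 1 - b.1, by omega⟩ := τ.injective hix
          rw [this] at hi
          have := Finset.mem_Iio.1 hi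
          have := Fin.lt_def.1 this
          simp only at this
          omega
      have := Finset.orderEmbOfFin_unique hT hmem hmono
      exact congrFun this ⟨a, h⟩
    intro a h
    rw [key π hUπ rfl rfl a h, key σ hUσ hm.symm him' a h]
  -- combine
  apply Equiv.ext
  intro i
  rcases Nat.lt_trichotomy (i : ℕ) (m : ℕ) with hi | hi | hi
  · have := hreg1 i.1 hi
    have hie : (⟨i.1, hi.trans hmlt⟩ : Fin n) = i := rfl
    rwa [hie] at this
  · have hie : i = m := Fin.ext hi
    rw [hie, hmdef, π.apply_symm_apply, hmdef.symm.trans hm, σ.apply_symm_apply]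
  · have hilt := i.isLt
    have ha : n - 1 - (n - 1 - i.1) = i.1 := by omega
    have har : n - 1 - i.1 < r := by omega
    have := hreg3 (n - 1 - i.1) har
    have hie : (⟨n - 1 - (n - 1 - i.1), by omega⟩ : Fin n) = i := Fin.ext (by simpa using ha)
    rwa [hie] at this

lemma exists_perm {top : Fin n} (htop : ∀ x : Fin n, x ≤ top) (m : ℕ) (hmn : m < n)
    (S : Finset (Fin n)) (hcard : S.card = m) (htopS : top ∉ S) :
    ∃ π : Equiv.Perm (Fin n), Uni π ∧ (π.symm top : ℕ) = m ∧
      (Iio (π.symm top)).image π = S := by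
  classical
  have hn : 0 < n := by omega
  set T : Finset (Fin n) := univ \ insert top S with hTdef
  have hT : T.card = n - 1 - m := by
    rw [hTdef, Finset.card_sdiff_of_subset (Finset.subset_univ _),
      Finset.card_insert_of_notMem htopS, hcard, Finset.card_univ, Fintype.card_fin]
    omega
  set g : Fin n → Fin n := fun i =>
    if h : i.1 < m then S.orderEmbOfFin hcard ⟨i.1, h⟩
    else if h2 : i.1 = m then top
    else T.orderEmbOfFin hT ⟨n - 1 - i.1, by have := i.isLt; omega⟩
    with hgdef
  have hv1 : ∀ (i : Fin n) (h : i.1 < m), g i = S.orderEmbOfFin hcard ⟨i.1, h⟩ := by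
    intro i h; rw [hgdef]; simp only [dif_pos h]
  have hv2 : ∀ (i : Fin n), i.1 = m → g i = top := by
    intro i h; rw [hgdef]; simp only [dif_neg (by omega : ¬ i.1 < m), dif_pos h]
  have hv3 : ∀ (i : Fin n) (h : m < i.1),
      g i = T.orderEmbOfFin hT ⟨n - 1 - i.1, by have := i.isLt; omega⟩ := by
    intro i h; rw [hgdef]
    simp only [dif_neg (by omega : ¬ i.1 < m), dif_neg (by omega : ¬ i.1 = m)]
  have hmem1 : ∀ (i : Fin n) (h : i.1 < m), g i ∈ S := by
    intro i h; rw [hv1 i h]; exact Finset.orderEmbOfFin_mem S hcard _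
  have hmem3 : ∀ (i : Fin n) (h : m < i.1), g i ∈ T := by
    intro i h; rw [hv3 i h]; exact Finset.orderEmbOfFin_mem T hT _
  have hTnot : ∀ x ∈ T, x ≠ top ∧ x ∉ S := by
    intro x hx
    rw [hTdef, Finset.mem_sdiff] at hx
    have := hx.2
    rw [Finset.mem_insert] at this
    push_neg at this
    exact this
  have hginj : Function.Injective g := by
    intro i j heq
    rcases Nat.lt_trichotomy i.1 m with hi | hi | hi <;>
      rcases Nat.lt_trichotomy j.1 m with hj | hj | hj
    · rw [hv1 i hi, hv1 j hj] at heq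
      have := (S.orderEmbOfFin hcard).injective heq
      exact Fin.ext (by simpa using this)
    · exact absurd (hv2 j hj ▸ heq ▸ hmem1 i hi) htopS
    · have := hTnot _ (hmem3 j hj)
      exact absurd (heq ▸ hmem1 i hi) this.2
    · exact absurd ((hv2 i hi) ▸ heq ▸ hmem1 j hj) htopS
    · exact Fin.ext (hi.trans hj.symm)
    · have := hTnot _ (hmem3 j hj)
      exact absurd ((hv2 i hi ▸ heq).symm) this.1
    · have := hTnot _ (hmem3 i hi)
      exact absurd (heq.symm ▸ hmem1 j hj) this.2
    · have := hTnot _ (hmem3 i hi)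
      exact absurd (hv2 j hj ▸ heq) this.1
    · rw [hv3 i hi, hv3 j hj] at heq
      have := (T.orderEmbOfFin hT).injective heq
      have hvv := congrArg Fin.val this
      simp only at hvv
      have hi2 := i.isLt; have hj2 := j.isLt
      exact Fin.ext (by omega)
  have hgbij : Function.Bijective g := Finite.injective_iff_bijective.mp hginj
  refine ⟨Equiv.ofBijective g hgbij, ?_, ?_, ?_⟩
  case' refine_2 =>
    have hgm : Equiv.ofBijective g hgbij ⟨m, hmn⟩ = top := hv2 ⟨m, hmn⟩ rfl
    have : (Equiv.ofBijective g hgbij).symm top = ⟨m, hmn⟩ :=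
      (Equiv.symm_apply_eq _).2 hgm.symm
    rw [this]
  all_goals {
    have hA : ∀ i j : Fin n, i < j → j.1 ≤ m → g i < g j := by
      intro i j hij hjm
      rcases eq_or_lt_of_le hjm with hj | hj
      · rw [hv2 j hj]
        have hi : i.1 < m := by have := Fin.lt_def.1 hij; omega
        refine lt_of_le_of_ne (htop _) fun h => htopS (h ▸ hmem1 i hi)
      · have hi : i.1 < m := (Fin.lt_def.1 hij).trans hj
        rw [hv1 i hi, hv1 j hj]
        exact (S.orderEmbOfFin hcard).strictMono (Fin.lt_def.1 hij)
    have hB : ∀ i j : Fin n, m ≤ i.1 → i < j → g j < g i := by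
      intro i j him hij
      rcases eq_or_lt_of_le him with hi | hi
      · rw [hv2 i hi.symm]
        have hj : m < j.1 := by have := Fin.lt_def.1 hij; omega
        have := hTnot _ (hmem3 j hj)
        exact lt_of_le_of_ne (htop _) this.1
      · have hj : m < j.1 := hi.trans (Fin.lt_def.1 hij)
        rw [hv3 i hi, hv3 j hj]
        apply (T.orderEmbOfFin hT).strictMono
        show n - 1 - j.1 < n - 1 - i.1
        have hj2 := j.isLt
        have := Fin.lt_def.1 hij
        omega
    first
    | -- Uni
      (intro i j l hij hjl h1 h2
       rcases le_or_gt j.1 m with hjm | hjm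
       · exact absurd h1 (not_lt.2 (hA i j hij hjm).le)
       · exact absurd h2 (not_lt.2 (hB j l hjm.le hjl).le))
    | -- image
      (have hsymm : (Equiv.ofBijective g hgbij).symm top = ⟨m, hmn⟩ :=
        (Equiv.symm_apply_eq _).2 (hv2 ⟨m, hmn⟩ rfl).symm
       rw [hsymm]
       apply Finset.eq_of_subset_of_card_le
       · intro x hx
         obtain ⟨i, hi, hix⟩ := Finset.mem_image.1 hx
         have hi' : i.1 < m := Fin.lt_def.1 (Finset.mem_Iio.1 hi)
         exact hix ▸ hmem1 i hi'
       · rw [Finset.card_image_of_injective _ (Equiv.ofBijective g hgbij).injective,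
           Fin.card_Iio, hcard])
  }

end CardAux

theorem card_avoid_213_312_with_lrmax (n k : ℕ) (hk1 : 1 ≤ k) (hk2 : k ≤ n) :
    Nat.card {π : Equiv.Perm (Fin n) // (Avoids213 π ∧ Avoids312 π) ∧ lrmax π = k} =
      Nat.choose (n - 1) (k - 1) := by
  classical
  open Finset CardAux in
  have hn : 0 < n := lt_of_lt_of_le hk1 hk2
  set top : Fin n := ⟨n - 1, by omega⟩ with htopdef
  have htop : ∀ x : Fin n, x ≤ top := fun x => by
    rw [Fin.le_def]
    have := x.isLt
    show x.1 ≤ n - 1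
    omega
  have hmval : ∀ p : {π : Equiv.Perm (Fin n) //
      (Avoids213 π ∧ Avoids312 π) ∧ lrmax π = k}, ((p.1).symm top : ℕ) = k - 1 := by
    rintro ⟨π, hA, hl⟩
    have := lrmax_eq ((avoids_iff_uni π).1 hA) htop (top := top)
    simp only at *
    omega
  set f : {π : Equiv.Perm (Fin n) // (Avoids213 π ∧ Avoids312 π) ∧ lrmax π = k} →
      {S : Finset (Fin n) // S.card = k - 1 ∧ top ∉ S} := fun p =>
    ⟨(Finset.Iio (p.1.symm top)).image p.1, by
      constructor
      · rw [Finset.card_image_of_injective _ p.1.injective, Fin.card_Iio, hmval p]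
      · intro hmem
        obtain ⟨i, hi, hix⟩ := Finset.mem_image.1 hmem
        have : i = p.1.symm top := p.1.injective (hix.trans (p.1.apply_symm_apply top).symm)
        rw [this] at hi
        exact absurd (Finset.mem_Iio.1 hi) (lt_irrefl _)⟩
    with hfdef
  have hbij : Function.Bijective f := by
    constructor
    · rintro ⟨π, hπ⟩ ⟨σ, hσ⟩ heq
      have him := Subtype.ext_iff.1 heq
      simp only [hfdef] at him
      have hUπ := (avoids_iff_uni π).1 hπ.1
      have hUσ := (avoids_iff_uni σ).1 hσ.1
      have hmm : π.symm top = σ.symm top :=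
        Fin.ext ((hmval ⟨π, hπ⟩).trans (hmval ⟨σ, hσ⟩).symm)
      exact Subtype.ext (eq_of_data hUπ hUσ htop hmm him)
    · rintro ⟨S, hScard, hStop⟩
      have hmn : k - 1 < n := by omega
      obtain ⟨π, hU, hsv, hsi⟩ := exists_perm htop (k - 1) hmn S hScard hStop
      have hlr : lrmax π = k := by
        rw [lrmax_eq hU htop, hsv]
        omega
      refine ⟨⟨π, (avoids_iff_uni π).2 hU, hlr⟩, ?_⟩
      exact Subtype.ext hsi
  rw [Nat.card_eq_of_bijective f hbij]
  have e : {S : Finset (Fin n) // S.card = k - 1 ∧ top ∉ S} ≃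
      {S : Finset (Fin n) // S ∈ (Finset.univ.erase top).powersetCard (k - 1)} :=
    Equiv.subtypeEquivRight fun S => by
      simp [Finset.mem_powersetCard, Finset.subset_erase, and_comm]
  rw [Nat.card_congr e, Nat.card_eq_fintype_card, Fintype.card_coe,
    Finset.card_powersetCard, Finset.card_erase_of_mem (Finset.mem_univ _),
    Finset.card_univ, Fintype.card_fin]
end
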